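/- arXiv:2108.05729 — 7 statements merged into one kernel-verified Lean document; each statement's English description precedes it below -/
import Mathlib

section
/- Let n > 1 and let Q be the linear span of {1, z, z², …, z^{n-1}} inside H²(𝔻). For a holomorphic self-map φ of 𝔻, the composition operator C_φ maps Q into Q if and only if φ is an affine map φ(z) = a + bz with |a| + |b| ≤ 1. -/
open Complex Metric Filter Set

noncomputable section

/-- A holomorphic self-map of the open unit disc. -/
def SelfMapD (φ : ℂ → ℂ) : Prop :=
  DifferentiableOn ℂ φ (Metric.ball (0:ℂ) 1) ∧
  Set.MapsTo φ (Metric.ball (0:ℂ) 1) (Metric.ball (0:ℂ) 1)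

/-- Membership in the Hardy space `H²(𝔻)`. -/
def MemHardy2 (f : ℂ → ℂ) : Prop :=
  DifferentiableOn ℂ f (Metric.ball (0:ℂ) 1) ∧
  ∃ M : ℝ, ∀ r : ℝ, 0 ≤ r → r < 1 →
    (∫ t in (0:ℝ)..(2 * Real.pi),
      ‖f ((r : ℂ) * Complex.exp (t * Complex.I))‖ ^ 2) ≤ M

/-- An inner function: a bounded-by-one holomorphic function on `𝔻` whose radial
boundary values have modulus one almost everywhere. -/
def InnerFunction (θ : ℂ → ℂ) : Prop :=
  DifferentiableOn ℂ θ (Metric.ball (0:ℂ) 1) ∧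
  (∀ z ∈ Metric.ball (0:ℂ) 1, ‖θ z‖ ≤ 1) ∧
  ∀ᵐ t : ℝ, Filter.Tendsto
    (fun r : ℝ => ‖θ ((r : ℂ) * Complex.exp (t * Complex.I))‖)
    (nhdsWithin 1 (Set.Iio 1)) (nhds 1)

/-- The `n`-th Taylor coefficient of `f` at the origin. -/
def hcoef (f : ℂ → ℂ) (n : ℕ) : ℂ := iteratedDeriv n f 0 / n.factorial

/-- The `H²` inner product, via Taylor coefficients. -/
def hInner (f g : ℂ → ℂ) : ℂ := ∑' n : ℕ, hcoef f n * (starRingEnd ℂ) (hcoef g n)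

/-- The square of the `H²` norm. -/
def hNorm2 (f : ℂ → ℂ) : ℝ := ∑' n : ℕ, ‖hcoef f n‖ ^ 2

/-- Membership in the model space `Q_θ = H² ⊖ θH²`. -/
def MemModel (θ f : ℂ → ℂ) : Prop :=
  MemHardy2 f ∧ ∀ g, MemHardy2 g → hInner f (fun z => θ z * g z) = 0

/-- The model space `Q_θ` is invariant under the composition operator `C_φ`. -/
def ModelInv (θ φ : ℂ → ℂ) : Prop :=
  ∀ f, MemModel θ f → MemModel θ (fun z => f (φ z))

/-- The Beurling subspace `θH²` is invariant under the composition operator `C_φ`. -/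
def BeurlingInv (θ φ : ℂ → ℂ) : Prop :=
  ∀ f, MemHardy2 f → ∃ g, MemHardy2 g ∧
    ∀ z ∈ Metric.ball (0:ℂ) 1, θ (φ z) * f (φ z) = θ z * g z

/-- A subspace of functions is invariant under `C_φ` (as functions on the disc). -/
def SpanInvOn (Q : Submodule ℂ (ℂ → ℂ)) (φ : ℂ → ℂ) : Prop :=
  ∀ f ∈ Q, ∃ g ∈ Q, ∀ z ∈ Metric.ball (0:ℂ) 1, f (φ z) = g z

/-- The (holomorphic extension of the) quotient `(θ∘σ)/θ` lies in `H²`. -/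
def QuotInH2 (θ σ : ℂ → ℂ) : Prop :=
  ∃ g, MemHardy2 g ∧ ∀ z ∈ Metric.ball (0:ℂ) 1, θ z ≠ 0 → g z = θ (σ z) / θ z

/-- The model space spanned by `z^t/(1-ᾱz)^{t+1}`, `0 ≤ t ≤ n-1`. -/
def Qball (α : ℂ) (n : ℕ) : Submodule ℂ (ℂ → ℂ) :=
  Submodule.span ℂ
    {f : ℂ → ℂ | ∃ t : ℕ, t < n ∧ f = fun z => z ^ t / (1 - (starRingEnd ℂ) α * z) ^ (t + 1)}

open Polynomial


lemma ball_infinite : (Metric.ball (0:ℂ) 1).Infinite := by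
  have h1 : (Set.Ioo (0:ℝ) (1/2)).Infinite := Set.infinite_coe_iff.mp (Set.Ioo.infinite (by norm_num))
  have h2 : ((fun x : ℝ => (x:ℂ)) '' Set.Ioo 0 (1/2)).Infinite :=
    h1.image (fun x _ y _ h => Complex.ofReal_inj.mp h)
  refine h2.mono ?_
  rintro z ⟨x, hx, rfl⟩
  simp only [Metric.mem_ball, dist_zero_right, Complex.norm_real, Real.norm_eq_abs]
  rw [abs_of_pos hx.1]; linarith [hx.2]

lemma poly_eq_of_ball (p q : ℂ[X]) (h : ∀ z ∈ Metric.ball (0:ℂ) 1, p.eval z = q.eval z) :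
    p = q := by
  have hz := Polynomial.eq_zero_of_infinite_isRoot (p - q)
    (ball_infinite.mono fun z hz => by
      simp [Polynomial.IsRoot, sub_eq_zero, h z hz])
  exact sub_eq_zero.mp hz

lemma mem_span_poly (n : ℕ) (p : ℂ[X]) (hp : p.natDegree < n) :
    (fun z => p.eval z) ∈
      Submodule.span ℂ {f : ℂ → ℂ | ∃ i : ℕ, i < n ∧ f = fun z => z ^ i} := by
  have he : (fun z : ℂ => p.eval z)
      = ∑ i ∈ Finset.range n, p.coeff i • (fun z : ℂ => z ^ i) := by
    funext z
    rw [Polynomial.eval_eq_sum_range' hp z]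
    simp [Finset.sum_apply]
  rw [he]
  exact Submodule.sum_mem _ fun i hi => Submodule.smul_mem _ _
    (Submodule.subset_span ⟨i, Finset.mem_range.mp hi, rfl⟩)

lemma span_poly (n : ℕ) (hn : 0 < n) (f : ℂ → ℂ)
    (hf : f ∈ Submodule.span ℂ {f : ℂ → ℂ | ∃ i : ℕ, i < n ∧ f = fun z => z ^ i}) :
    ∃ p : ℂ[X], p.natDegree < n ∧ f = fun z => p.eval z := by
  induction hf using Submodule.span_induction with
  | mem x hx =>
    obtain ⟨i, hi, rfl⟩ := hx
    exact ⟨X ^ i, by simpa using hi, by funext z; simp⟩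
  | zero => exact ⟨0, by simpa using hn, by funext z; simp⟩
  | add x y hx hy ihx ihy =>
    obtain ⟨p, hp, rfl⟩ := ihx
    obtain ⟨q, hq, rfl⟩ := ihy
    exact ⟨p + q, lt_of_le_of_lt (Polynomial.natDegree_add_le p q) (max_lt hp hq),
      by funext z; simp⟩
  | smul c x hx ihx =>
    obtain ⟨p, hp, rfl⟩ := ihx
    exact ⟨C c * p, lt_of_le_of_lt (Polynomial.natDegree_C_mul_le c p) hp,
      by funext z; simp⟩

/-- the span of `1, z, …, z^{n-1}` is `C_φ`-invariant iff `φ` is affine. -/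
theorem polynomial_model_space_invariant_iff_affine
    (n : ℕ) (hn : 1 < n) (φ : ℂ → ℂ) (hφ : SelfMapD φ) :
    SpanInvOn (Submodule.span ℂ {f : ℂ → ℂ | ∃ i : ℕ, i < n ∧ f = fun z => z ^ i}) φ ↔
      ∃ a b : ℂ, ‖a‖ + ‖b‖ ≤ 1 ∧
        ∀ z ∈ Metric.ball (0:ℂ) 1, φ z = a + b * z := by
  have hn0 : 0 < n := by omega
  constructor
  · -- hard direction
    intro h
    -- identity function is in the span
    have hid : (fun z : ℂ => z) ∈
        Submodule.span ℂ {f : ℂ → ℂ | ∃ i : ℕ, i < n ∧ f = fun z => z ^ i} :=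
      Submodule.subset_span ⟨1, hn, by funext z; simp⟩
    obtain ⟨g, hg, hgφ⟩ := h _ hid
    obtain ⟨p, hpdeg, rfl⟩ := span_poly n hn0 g hg
    -- φ agrees with p on the ball
    have hφp : ∀ z ∈ Metric.ball (0:ℂ) 1, φ z = p.eval z := hgφ
    -- z^(n-1) is in the span
    have hpow : (fun z : ℂ => z ^ (n-1)) ∈
        Submodule.span ℂ {f : ℂ → ℂ | ∃ i : ℕ, i < n ∧ f = fun z => z ^ i} :=
      Submodule.subset_span ⟨n-1, by omega, rfl⟩
    obtain ⟨g2, hg2, hg2φ⟩ := h _ hpow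
    obtain ⟨q, hqdeg, rfl⟩ := span_poly n hn0 g2 hg2
    -- p^(n-1) = q
    have hpq : p ^ (n-1) = q := by
      apply poly_eq_of_ball
      intro z hz
      have h1 := hg2φ z hz
      have h2 := hφp z hz
      rw [h2] at h1
      simpa [Polynomial.eval_pow] using h1
    -- degree of p is at most 1
    have hd1 : p.natDegree ≤ 1 := by
      have := Polynomial.natDegree_pow p (n-1)
      rw [hpq] at this
      have h1 : (n-1) * p.natDegree ≤ (n-1) * 1 := by omega
      exact Nat.le_of_mul_le_mul_left h1 (by omega)
    -- write p = C b * X + C a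
    have hp : p = Polynomial.C (p.coeff 1) * Polynomial.X + Polynomial.C (p.coeff 0) :=
      Polynomial.eq_X_add_C_of_degree_le_one
        (Polynomial.natDegree_le_iff_degree_le.mp hd1)
    set a := p.coeff 0 with ha
    set b := p.coeff 1 with hb
    have hφab : ∀ z ∈ Metric.ball (0:ℂ) 1, φ z = a + b * z := by
      intro z hz
      rw [hφp z hz]
      conv_lhs => rw [hp]
      simp only [Polynomial.eval_add, Polynomial.eval_mul, Polynomial.eval_C, Polynomial.eval_X]
      ring
    refine ⟨a, b, ?_, hφab⟩
    -- the norm bound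
    by_contra hc
    push_neg at hc
    have h0 : (0:ℂ) ∈ Metric.ball (0:ℂ) 1 := by simp
    have haball : ‖a‖ < 1 := by
      have := hφ.2 h0
      rw [show φ 0 = a by simpa using hφab 0 h0] at this
      simpa using this
    have hbpos : 0 < ‖b‖ := by linarith
    have hbne : b ≠ 0 := fun hb0 => by rw [hb0] at hbpos; simp at hbpos
    obtain ⟨r, hr0, hr1, hrbig⟩ :
        ∃ r : ℝ, 0 ≤ r ∧ r < 1 ∧ 1 < ‖a‖ + r * ‖b‖ := by
      refine ⟨((1 - ‖a‖) / ‖b‖ + 1) / 2, ?_, ?_, ?_⟩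
      · have : 0 ≤ (1 - ‖a‖) / ‖b‖ :=
          div_nonneg (by linarith) (le_of_lt hbpos)
        linarith
      · have : (1 - ‖a‖) / ‖b‖ < 1 :=
          (div_lt_one hbpos).mpr (by linarith)
        linarith
      · have h1 : (1 - ‖a‖) / ‖b‖
            < ((1 - ‖a‖) / ‖b‖ + 1) / 2 := by
          have : (1 - ‖a‖) / ‖b‖ < 1 :=
            (div_lt_one hbpos).mpr (by linarith)
          linarith
        have h2 := (div_lt_iff₀ hbpos).mp h1
        linarith
    obtain ⟨s, hsabs, hsa⟩ : ∃ s : ℂ, ‖s‖ = 1 ∧ a = s * (‖a‖ : ℂ) := by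
      by_cases hA : a = 0
      · exact ⟨1, by simp, by simp [hA]⟩
      · refine ⟨a / (‖a‖ : ℂ), ?_, ?_⟩
        · rw [norm_div, Complex.norm_real, Real.norm_eq_abs,
            _root_.abs_of_nonneg (norm_nonneg a),
            div_self (norm_ne_zero_iff.mpr hA)]
        · rw [div_mul_cancel₀ a
            (Complex.ofReal_ne_zero.mpr (norm_ne_zero_iff.mpr hA))]
    obtain ⟨u, huabs, hbu⟩ :
        ∃ u : ℂ, ‖u‖ = 1 ∧ b * u = s * (‖b‖ : ℂ) := by
      have hbabsne : ((‖b‖ : ℝ) : ℂ) ≠ 0 :=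
        Complex.ofReal_ne_zero.mpr (norm_ne_zero_iff.mpr hbne)
      refine ⟨s * (starRingEnd ℂ) b / (‖b‖ : ℂ), ?_, ?_⟩
      · rw [norm_div, norm_mul, hsabs, Complex.norm_conj, Complex.norm_real, Real.norm_eq_abs,
          _root_.abs_of_nonneg (norm_nonneg b), one_mul,
          div_self (norm_ne_zero_iff.mpr hbne)]
      · rw [mul_div_assoc',
          show b * (s * (starRingEnd ℂ) b) = s * (b * (starRingEnd ℂ) b) by ring,
          Complex.mul_conj, ← Complex.sq_norm]
        push_cast
        rw [mul_div_assoc, sq, mul_div_assoc, div_self hbabsne, mul_one]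
    have hz₀ball : (r : ℂ) * u ∈ Metric.ball (0:ℂ) 1 := by
      simp only [Metric.mem_ball, dist_zero_right, norm_mul,
        Complex.norm_real, Real.norm_eq_abs, huabs, mul_one]
      rw [_root_.abs_of_nonneg hr0]
      exact hr1
    have hval : φ ((r : ℂ) * u) = s * ((‖a‖ + r * ‖b‖ : ℝ) : ℂ) := by
      rw [hφab _ hz₀ball,
        show b * ((r:ℂ) * u) = (r:ℂ) * (b * u) by ring, hbu]
      conv_lhs => rw [hsa]
      push_cast
      ring
    have hlt := hφ.2 hz₀ball
    rw [Metric.mem_ball, dist_zero_right, hval, norm_mul, hsabs,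
      one_mul, Complex.norm_real, Real.norm_eq_abs, _root_.abs_of_nonneg (by positivity)] at hlt
    linarith
  · -- easy direction
    rintro ⟨a, b, hab, hφab⟩
    intro f hf
    obtain ⟨p, hpdeg, rfl⟩ := span_poly n hn0 f hf
    set q : Polynomial ℂ := p.comp (Polynomial.C a + Polynomial.C b * Polynomial.X) with hq
    have hqdeg : q.natDegree < n := by
      have h1 : (Polynomial.C a + Polynomial.C b * Polynomial.X).natDegree ≤ 1 := by
        apply le_trans (Polynomial.natDegree_add_le _ _)
        simp [Polynomial.natDegree_C_mul_le]
        exact le_trans (Polynomial.natDegree_C_mul_le b Polynomial.X) (by simp)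
      calc q.natDegree ≤ p.natDegree * (Polynomial.C a + Polynomial.C b * Polynomial.X).natDegree :=
            Polynomial.natDegree_comp_le
        _ ≤ p.natDegree * 1 := Nat.mul_le_mul_left _ h1
        _ < n := by omega
    refine ⟨fun z => q.eval z, mem_span_poly n q hqdeg, ?_⟩
    intro z hz
    rw [hφab z hz, hq]
    simp [Polynomial.eval_comp]
end
end

section
/- Let α ∈ 𝔻 be nonzero and θ(z) = z·(z−α)/(1−conj(α)z). The two-dimensional model space Q_θ = span{1, 1/(1−conj(α)z)} is invariant under C_φ if and only if φ(z) = ((c₁−1) + (conj(α)+c₂)z)/(conj(α)(c₁ + c₂ z)) for scalars c₁, c₂ not both zero. -/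
open Complex Metric Filter Set

noncomputable section

/-- If `φ` maps the disc to itself and is given by the Möbius formula, the denominator
`c₁ + c₂ z` cannot vanish on the disc. -/
lemma denom_ne_zero (β c₁ c₂ : ℂ) (φ : ℂ → ℂ)
    (hβ1 : ‖β‖ < 1) (hβ0 : β ≠ 0)
    (hne : c₁ ≠ 0 ∨ c₂ ≠ 0)
    (hmap : Set.MapsTo φ (Metric.ball (0:ℂ) 1) (Metric.ball (0:ℂ) 1))
    (hform : ∀ z ∈ Metric.ball (0:ℂ) 1,
      φ z = ((c₁ - 1) + (β + c₂) * z) / (β * (c₁ + c₂ * z))) :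
    ∀ z ∈ Metric.ball (0:ℂ) 1, c₁ + c₂ * z ≠ 0 := by
  intro z hz h0
  have hz1 : ‖z‖ < 1 := by
    simpa [Complex.dist_eq] using (Metric.mem_ball.mp hz)
  rcases eq_or_ne c₂ 0 with hc2 | hc2
  · rcases hne with h | h
    · apply h; simpa [hc2] using h0
    · exact h hc2
  have hc2' : 0 < ‖c₂‖ := by
    simpa [norm_pos_iff] using hc2
  set δ : ℝ := min ((1 - ‖z‖) / 2) ((1 - ‖β‖) / (2 * ‖c₂‖)) with hδ
  have hδpos : 0 < δ := by
    apply lt_min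
    · linarith
    · apply div_pos (by linarith) (by positivity)
  have hδ1 : δ ≤ (1 - ‖z‖) / 2 := min_le_left _ _
  have hδ2 : ‖c₂‖ * δ ≤ (1 - ‖β‖) / 2 := by
    have := min_le_right ((1 - ‖z‖) / 2) ((1 - ‖β‖) / (2 * ‖c₂‖))
    calc ‖c₂‖ * δ ≤ ‖c₂‖ * ((1 - ‖β‖) / (2 * ‖c₂‖)) := by
          exact mul_le_mul_of_nonneg_left this (le_of_lt hc2')
      _ = (1 - ‖β‖) / 2 := by field_simp
  set z' : ℂ := z + (δ : ℂ) with hz'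
  have hz'mem : z' ∈ Metric.ball (0:ℂ) 1 := by
    rw [Metric.mem_ball, Complex.dist_eq, sub_zero]
    calc ‖z'‖ ≤ ‖z‖ + ‖(δ : ℂ)‖ := norm_add_le _ _
      _ = ‖z‖ + δ := by
          rw [Complex.norm_real, Real.norm_eq_abs, abs_of_pos hδpos]
      _ < 1 := by linarith
  have hz'1 : ‖z'‖ < 1 := by
    simpa [Complex.dist_eq] using (Metric.mem_ball.mp hz'mem)
  -- denominator at z'
  have hD' : c₁ + c₂ * z' = c₂ * δ := by
    rw [hz']; ring_nf; linear_combination h0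
  have hDne : c₂ * (δ : ℂ) ≠ 0 := by
    apply mul_ne_zero hc2
    exact_mod_cast ne_of_gt hδpos
  -- numerator estimate
  have hnum : (c₁ - 1) + (β + c₂) * z' = c₂ * δ + (β * z' - 1) := by
    rw [hz']; linear_combination h0
  have hbz' : (1 - ‖β‖) ≤ ‖β * z' - 1‖ := by
    have h1 : ‖β * z'‖ ≤ ‖β‖ := by
      rw [norm_mul]
      calc ‖β‖ * ‖z'‖ ≤ ‖β‖ * 1 := by
            exact mul_le_mul_of_nonneg_left (le_of_lt hz'1) (norm_nonneg _)
        _ = ‖β‖ := mul_one _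
    calc (1 - ‖β‖) ≤ 1 - ‖β * z'‖ := by linarith
      _ ≤ ‖β * z' - 1‖ := by
          have h2 : ‖1 - β * z'‖ = ‖β * z' - 1‖ := by
            rw [← norm_neg]; ring_nf
          have h3 : ‖(1:ℂ)‖ - ‖β * z'‖ ≤ ‖(1:ℂ) - β * z'‖ := norm_sub_norm_le _ _
          simp only [norm_one] at h3
          linarith
  have hcδ : ‖c₂ * δ‖ = ‖c₂‖ * δ := by
    rw [norm_mul, Complex.norm_real, Real.norm_eq_abs, abs_of_pos hδpos]
  have hnumlb : (1 - ‖β‖) / 2 ≤ ‖(c₁ - 1) + (β + c₂) * z'‖ := by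
    rw [hnum]
    calc (1 - ‖β‖) / 2 = (1 - ‖β‖) - (1 - ‖β‖) / 2 := by ring
      _ ≤ ‖β * z' - 1‖ - ‖c₂‖ * δ := by
          have := hδ2; linarith
      _ = ‖β * z' - 1‖ - ‖c₂ * δ‖ := by rw [hcδ]
      _ ≤ ‖c₂ * δ + (β * z' - 1)‖ := by
          have h3 : ‖β * z' - 1‖ ≤ ‖c₂ * (δ:ℂ) + (β * z' - 1)‖ + ‖c₂ * (δ:ℂ)‖ := by
            have := norm_add_le (c₂ * (δ:ℂ) + (β * z' - 1)) (-(c₂ * (δ:ℂ)))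
            simpa using this
          linarith
  -- denominator β(c₂ δ) upper bound
  have hdenub : ‖β * (c₁ + c₂ * z')‖ ≤ (1 - ‖β‖) / 2 := by
    rw [hD', norm_mul, hcδ]
    calc ‖β‖ * (‖c₂‖ * δ) ≤ 1 * (‖c₂‖ * δ) := by
          apply mul_le_mul_of_nonneg_right (le_of_lt hβ1)
          positivity
      _ = ‖c₂‖ * δ := one_mul _
      _ ≤ (1 - ‖β‖) / 2 := hδ2
  have hφz' : ‖φ z'‖ < 1 := by
    have := hmap hz'mem
    simpa [Complex.dist_eq] using (Metric.mem_ball.mp this)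
  rw [hform z' hz'mem] at hφz'
  rw [norm_div] at hφz'
  have hdenpos : 0 < ‖β * (c₁ + c₂ * z')‖ := by
    apply norm_pos_iff.mpr
    apply mul_ne_zero hβ0
    rw [hD']; exact hDne
  have : ‖(c₁ - 1) + (β + c₂) * z'‖ < ‖β * (c₁ + c₂ * z')‖ :=
    (div_lt_one hdenpos).mp hφz'
  have hβ1' : 0 < (1 - ‖β‖) / 2 := by linarith
  linarith

/-- for `θ = z·b_α` with `α ≠ 0`, the model space `span{1, (1-conj(α)z)⁻¹}` is
`C_φ`-invariant iff `φ` is the indicated Möbius map. -/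
theorem two_dim_model_space_invariant_iff_moebius
    (α : ℂ) (hα : α ∈ Metric.ball (0:ℂ) 1) (hα0 : α ≠ 0)
    (φ : ℂ → ℂ) (hφ : SelfMapD φ) :
    SpanInvOn (Submodule.span ℂ
        {(fun _ => 1 : ℂ → ℂ), fun z => (1 - (starRingEnd ℂ) α * z)⁻¹}) φ ↔
      ∃ c₁ c₂ : ℂ, (c₁ ≠ 0 ∨ c₂ ≠ 0) ∧ ∀ z ∈ Metric.ball (0:ℂ) 1,
        φ z = ((c₁ - 1) + ((starRingEnd ℂ) α + c₂) * z) /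
          ((starRingEnd ℂ) α * (c₁ + c₂ * z)) := by
  set β : ℂ := (starRingEnd ℂ) α with hβ
  have hβ0 : β ≠ 0 := by
    simp [hβ, hα0]
  have hβ1 : ‖β‖ < 1 := by
    have : ‖α‖ < 1 := by
      simpa [Complex.dist_eq] using (Metric.mem_ball.mp hα)
    simpa [hβ] using this
  obtain ⟨hφdiff, hφmap⟩ := hφ
  constructor
  · -- forward direction
    intro hinv
    have hmem : (fun z => (1 - β * z)⁻¹) ∈ Submodule.span ℂ
        {(fun _ => 1 : ℂ → ℂ), fun z => (1 - β * z)⁻¹} :=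
      Submodule.subset_span (Set.mem_insert_of_mem _ rfl)
    obtain ⟨g, hg, hgeq⟩ := hinv _ hmem
    obtain ⟨a, b, hab⟩ := Submodule.mem_span_pair.mp hg
    have key : ∀ z ∈ Metric.ball (0:ℂ) 1,
        (1 - β * φ z)⁻¹ = a + b * (1 - β * z)⁻¹ := by
      intro z hz
      have := hgeq z hz
      rw [← hab] at this
      simpa [Pi.add_apply, Pi.smul_apply, smul_eq_mul] using this
    refine ⟨a + b, -(a * β), ?_, ?_⟩
    · -- not both zero
      by_contra h
      push_neg at h
      obtain ⟨h1, h2⟩ := h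
      have ha : a = 0 := by
        have h3 : a * β = 0 := by linear_combination -h2
        exact (mul_eq_zero.mp h3).resolve_right hβ0
      have hb : b = 0 := by
        rw [ha] at h1; simpa using h1
      have h0mem : (0:ℂ) ∈ Metric.ball (0:ℂ) 1 := by simp
      have := key 0 h0mem
      rw [ha, hb] at this
      simp only [zero_mul, add_zero, mul_zero, sub_zero] at this
      have hw : ‖φ 0‖ < 1 := by
        simpa [Complex.dist_eq] using (Metric.mem_ball.mp (hφmap h0mem))
      have hne1 : (1:ℂ) - β * φ 0 ≠ 0 := by
        intro hcon
        have : β * φ 0 = 1 := by linear_combination -hcon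
        have : ‖β * φ 0‖ = 1 := by rw [this]; simp
        rw [norm_mul] at this
        nlinarith [norm_nonneg β, norm_nonneg (φ 0)]
      exact hne1 (inv_eq_zero.mp this)
    · intro z hz
      have hz1 : ‖z‖ < 1 := by
        simpa [Complex.dist_eq] using (Metric.mem_ball.mp hz)
      have hw : ‖φ z‖ < 1 := by
        simpa [Complex.dist_eq] using (Metric.mem_ball.mp (hφmap hz))
      have h1 : (1:ℂ) - β * φ z ≠ 0 := by
        intro hcon
        have : β * φ z = 1 := by linear_combination -hcon
        have : ‖β * φ z‖ = 1 := by rw [this]; simp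
        rw [norm_mul] at this
        nlinarith [norm_nonneg β, norm_nonneg (φ z)]
      have h2 : (1:ℂ) - β * z ≠ 0 := by
        intro hcon
        have : β * z = 1 := by linear_combination -hcon
        have : ‖β * z‖ = 1 := by rw [this]; simp
        rw [norm_mul] at this
        nlinarith [norm_nonneg β, norm_nonneg z]
      have heq := key z hz
      have hEne : a + b * (1 - β * z)⁻¹ ≠ 0 := by
        rw [← heq]; exact inv_ne_zero h1
      have hDD : a * (1 - β * z) + b = (a + b * (1 - β * z)⁻¹) * (1 - β * z) := by
        field_simp
      have hDne : (a + b) + -(a * β) * z ≠ 0 := by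
        have : (a + b) + -(a * β) * z = a * (1 - β * z) + b := by ring
        rw [this, hDD]
        exact mul_ne_zero hEne h2
      have hden : β * ((a + b) + -(a * β) * z) ≠ 0 := mul_ne_zero hβ0 hDne
      rw [eq_div_iff hden]
      -- polynomial form of heq
      have heq' : (1 - β * z) = (a * (1 - β * z) + b) * (1 - β * φ z) := by
        have h3 : (1 - β * φ z)⁻¹ * (1 - β * φ z) = 1 := inv_mul_cancel₀ h1
        calc (1 - β * z) = ((1 - β * φ z)⁻¹ * (1 - β * φ z)) * (1 - β * z) := by
              rw [h3]; ring
          _ = ((a + b * (1 - β * z)⁻¹) * (1 - β * z)) * (1 - β * φ z) := by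
              rw [heq]; ring
          _ = (a * (1 - β * z) + b) * (1 - β * φ z) := by rw [← hDD]
      linear_combination heq'
  · -- reverse direction
    rintro ⟨c₁, c₂, hne, hform⟩
    have hDne := denom_ne_zero β c₁ c₂ φ hβ1 hβ0 hne hφmap hform
    intro f hf
    obtain ⟨a, b, hab⟩ := Submodule.mem_span_pair.mp hf
    refine ⟨(a - b * c₂ / β) • (fun _ => (1:ℂ)) +
      (b * (c₁ + c₂ / β)) • (fun z => (1 - β * z)⁻¹), ?_, ?_⟩
    · exact Submodule.add_mem _
        (Submodule.smul_mem _ _ (Submodule.subset_span (Set.mem_insert _ _)))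
        (Submodule.smul_mem _ _ (Submodule.subset_span (Set.mem_insert_of_mem _ rfl)))
    · intro z hz
      have hz1 : ‖z‖ < 1 := by
        simpa [Complex.dist_eq] using (Metric.mem_ball.mp hz)
      have h2 : (1:ℂ) - β * z ≠ 0 := by
        intro hcon
        have : β * z = 1 := by linear_combination -hcon
        have : ‖β * z‖ = 1 := by rw [this]; simp
        rw [norm_mul] at this
        nlinarith [norm_nonneg β, norm_nonneg z]
      have hD := hDne z hz
      have hφz : φ z = ((c₁ - 1) + (β + c₂) * z) / (β * (c₁ + c₂ * z)) := hform z hz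
      have hinv : (1:ℂ) - β * φ z = (1 - β * z) / (c₁ + c₂ * z) := by
        rw [hφz]
        field_simp
        ring
      have hfval : f (φ z) = a + b * (1 - β * φ z)⁻¹ := by
        rw [← hab]; simp [Pi.add_apply, Pi.smul_apply, smul_eq_mul]
      rw [hfval, hinv]
      simp only [Pi.add_apply, Pi.smul_apply, smul_eq_mul]
      rw [inv_div]
      field_simp
      linear_combination (-(b * c₂)) * inv_mul_cancel₀ h2
end
end

section
/- Let φ be a holomorphic self-map of 𝔻 such that θH²(𝔻) is invariant under C_φ for every inner function θ. Then φ is the identity map on 𝔻. -/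
open Complex Metric Filter Set

noncomputable section

lemma denom_ne_zero_s11 {α z : ℂ} (hα : ‖α‖ < 1) (hz : ‖z‖ ≤ 1)
    (hne : ‖z‖ < 1 ∨ True) : (1 : ℂ) - (starRingEnd ℂ) α * z ≠ 0 := by
  intro hc
  have h1 : (1 : ℂ) = (starRingEnd ℂ) α * z := by linear_combination hc
  have : ‖(starRingEnd ℂ) α * z‖ < 1 := by
    rw [norm_mul, Complex.norm_conj]
    calc ‖α‖ * ‖z‖ ≤ ‖α‖ * 1 := by
          exact mul_le_mul_of_nonneg_left hz (norm_nonneg _)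
      _ = ‖α‖ := mul_one _
      _ < 1 := hα
  rw [← h1] at this
  simp at this

lemma blaschke_abs_le {α z : ℂ} (hα : ‖α‖ < 1) (hz : ‖z‖ < 1) :
    ‖(α - z) / (1 - (starRingEnd ℂ) α * z)‖ ≤ 1 := by
  rw [norm_div, div_le_one]
  · have key : Complex.normSq (1 - (starRingEnd ℂ) α * z) - Complex.normSq (α - z)
        = (1 - Complex.normSq α) * (1 - Complex.normSq z) := by
      simp only [Complex.normSq_apply, Complex.sub_re, Complex.sub_im, Complex.one_re,
        Complex.one_im, Complex.mul_re, Complex.mul_im, Complex.conj_re, Complex.conj_im]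
      ring
    have h1 : Complex.normSq α < 1 := by
      rw [← Complex.sq_norm]; nlinarith [norm_nonneg α]
    have h2 : Complex.normSq z < 1 := by
      rw [← Complex.sq_norm]; nlinarith [norm_nonneg z]
    have hle : Complex.normSq (α - z) ≤ Complex.normSq (1 - (starRingEnd ℂ) α * z) := by
      nlinarith
    have := Real.sqrt_le_sqrt hle
    simpa [Complex.norm_def] using this
  · have hne := denom_ne_zero_s11 hα (le_of_lt hz) (Or.inl hz)
    exact (norm_pos_iff.mpr hne)

lemma blaschke_inner {α : ℂ} (hα : ‖α‖ < 1) :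
    InnerFunction (fun z => (α - z) / (1 - (starRingEnd ℂ) α * z)) := by
  refine ⟨?_, ?_, ?_⟩
  · intro z hz
    simp only [Metric.mem_ball, dist_zero_right] at hz
    apply DifferentiableAt.differentiableWithinAt
    apply DifferentiableAt.div
    · exact (differentiable_const α).differentiableAt.sub differentiable_id.differentiableAt
    · exact (differentiable_const _).differentiableAt.sub
        ((differentiable_const _).mul differentiable_id).differentiableAt
    · exact denom_ne_zero_s11 hα (le_of_lt hz) (Or.inl hz)
  · intro z hz
    simp only [Metric.mem_ball, dist_zero_right] at hz
    exact blaschke_abs_le hα hz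
  · apply Filter.Eventually.of_forall
    intro t
    set w : ℂ := Complex.exp (t * Complex.I) with hw
    have hwabs : ‖w‖ = 1 := by
      rw [hw, Complex.norm_exp]
      simp [Complex.mul_I_re, Complex.ofReal_im]
    have hwne : α ≠ w := by
      intro hc; rw [hc] at hα; rw [hwabs] at hα; exact lt_irrefl 1 hα
    have hdne : (1 : ℂ) - (starRingEnd ℂ) α * w ≠ 0 :=
      denom_ne_zero_s11 hα (le_of_eq hwabs) (Or.inr trivial)
    have habs1 : ‖(α - w) / (1 - (starRingEnd ℂ) α * w)‖ = 1 := by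
      have hid : (1 : ℂ) - (starRingEnd ℂ) α * w = w * (starRingEnd ℂ) (w - α) := by
        have hww : w * (starRingEnd ℂ) w = 1 := by
          have := Complex.mul_conj w
          rw [this, ← Complex.sq_norm, hwabs]; norm_num
        rw [map_sub, mul_sub, hww]; ring
      rw [norm_div, hid, norm_mul, hwabs, one_mul, Complex.norm_conj]
      rw [div_eq_one_iff_eq]
      · rw [show α - w = -(w - α) by ring, norm_neg]
      · intro hc
        rw [norm_eq_zero, sub_eq_zero] at hc
        exact hwne hc.symm
    have hcont : Filter.Tendsto
        (fun r : ℝ => ‖((r : ℂ) * w - α) / ((starRingEnd ℂ) α * ((r:ℂ)*w) - 1)‖)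
        (nhdsWithin 1 (Set.Iio 1)) (nhds (‖(w - α) / ((starRingEnd ℂ) α * w - 1)‖)) := by
      apply Filter.Tendsto.comp (continuous_norm.continuousAt)
      apply Filter.Tendsto.div
      · apply Filter.Tendsto.sub_const
        have : Filter.Tendsto (fun r : ℝ => (r : ℂ)) (nhdsWithin 1 (Set.Iio 1)) (nhds (1:ℂ)) := by
          have h1 : Filter.Tendsto (fun r : ℝ => r) (nhdsWithin 1 (Set.Iio 1)) (nhds (1:ℝ)) :=
            tendsto_id.mono_left nhdsWithin_le_nhds
          exact (Complex.continuous_ofReal.tendsto (1:ℝ)).comp h1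
        simpa using this.mul_const w
      · apply Filter.Tendsto.sub_const
        apply Filter.Tendsto.const_mul
        have : Filter.Tendsto (fun r : ℝ => (r : ℂ)) (nhdsWithin 1 (Set.Iio 1)) (nhds (1:ℂ)) := by
          have h1 : Filter.Tendsto (fun r : ℝ => r) (nhdsWithin 1 (Set.Iio 1)) (nhds (1:ℝ)) :=
            tendsto_id.mono_left nhdsWithin_le_nhds
          exact (Complex.continuous_ofReal.tendsto (1:ℝ)).comp h1
        simpa using this.mul_const w
      · intro hc
        apply hdne
        linear_combination -hc
    have heq : ∀ r : ℝ,
        ‖((r : ℂ) * w - α) / ((starRingEnd ℂ) α * ((r:ℂ)*w) - 1)‖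
        = ‖(α - (r:ℂ)*w) / (1 - (starRingEnd ℂ) α * ((r:ℂ)*w))‖ := by
      intro r
      rw [show ((r : ℂ) * w - α) = -(α - (r:ℂ)*w) by ring,
        show ((starRingEnd ℂ) α * ((r:ℂ)*w) - 1) = -(1 - (starRingEnd ℂ) α * ((r:ℂ)*w)) by ring,
        neg_div_neg_eq]
    have heq1 : ‖(w - α) / ((starRingEnd ℂ) α * w - 1)‖ = 1 := by
      rw [show (w - α) = -(α - w) by ring,
        show ((starRingEnd ℂ) α * w - 1) = -(1 - (starRingEnd ℂ) α * w) by ring,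
        neg_div_neg_eq, habs1]
    rw [heq1] at hcont
    refine hcont.congr ?_
    intro r
    exact heq r

lemma one_mem_hardy2 : MemHardy2 (fun _ : ℂ => (1 : ℂ)) := by
  refine ⟨differentiableOn_const 1, 2 * Real.pi, ?_⟩
  intro r _ _
  simp

/-- if `θH²` is `C_φ`-invariant for every inner `θ`, then `φ` is the identity. -/
theorem all_beurling_invariant_implies_identity
    (φ : ℂ → ℂ) (hφ : SelfMapD φ)
    (h : ∀ θ : ℂ → ℂ, InnerFunction θ → BeurlingInv θ φ) :
    ∀ z ∈ Metric.ball (0:ℂ) 1, φ z = z := by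
  intro α hα
  have hαabs : ‖α‖ < 1 := by
    simpa [Metric.mem_ball, dist_zero_right] using hα
  set θ : ℂ → ℂ := fun z => (α - z) / (1 - (starRingEnd ℂ) α * z) with hθ
  have hinner : InnerFunction θ := blaschke_inner hαabs
  obtain ⟨g, _, hg⟩ := h θ hinner (fun _ => (1:ℂ)) one_mem_hardy2
  have hφα : φ α ∈ Metric.ball (0:ℂ) 1 := hφ.2 hα
  have hφαabs : ‖φ α‖ < 1 := by
    simpa [Metric.mem_ball, dist_zero_right] using hφα
  have hαα : θ α = 0 := by simp [hθ]
  have key := hg α hα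
  rw [hαα, zero_mul, mul_one] at key
  -- key : θ (φ α) = 0
  have hdne : (1 : ℂ) - (starRingEnd ℂ) α * φ α ≠ 0 :=
    denom_ne_zero_s11 hαabs (le_of_lt hφαabs) (Or.inl hφαabs)
  have : α - φ α = 0 := by
    rcases div_eq_zero_iff.mp key with h1 | h2
    · exact h1
    · exact absurd h2 hdne
  exact (sub_eq_zero.mp this).symm
end
end

section
/- Let θ be an inner function such that θH²(𝔻) is invariant under C_φ for every holomorphic self-map φ of 𝔻. Then θ is a unimodular constant. -/
open Complex Metric Filter Set

noncomputable section

open MeasureTheory in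
/-- Mean value: for F holomorphic on the unit ball and 0 < r < 1,
    ∫ t in 0..2π, F (r e^{it}) = 2π F 0. -/
lemma meanValue (F : ℂ → ℂ) (hF : DifferentiableOn ℂ F (Metric.ball (0:ℂ) 1))
    (r : ℝ) (hr0 : 0 < r) (hr1 : r < 1) :
    (∫ t in (0:ℝ)..(2 * Real.pi), F ((r:ℂ) * Complex.exp (t * Complex.I)))
      = (2 * Real.pi) * F 0 := by
  have hdc : DiffContOnCl ℂ F (ball (0:ℂ) r) := by
    apply DifferentiableOn.diffContOnCl
    rw [closure_ball (0:ℂ) hr0.ne']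
    exact hF.mono (closedBall_subset_ball hr1)
  have hcirc := hdc.circleIntegral_sub_inv_smul (mem_ball_self hr0)
  have hmap : ∀ t : ℝ, circleMap 0 r t ≠ 0 := fun t => circleMap_ne_center hr0.ne'
  have h1 : (∮ z in C(0, r), (z - 0)⁻¹ • F z)
      = ∫ t in (0:ℝ)..(2 * Real.pi), Complex.I * F (circleMap 0 r t) := by
    simp only [circleIntegral, deriv_circleMap, sub_zero, smul_eq_mul]
    apply intervalIntegral.integral_congr
    intro t _
    field_simp [hmap t]
  rw [h1, intervalIntegral.integral_const_mul] at hcirc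
  have h2 : ∀ t : ℝ, circleMap 0 r t = (r:ℂ) * Complex.exp (t * Complex.I) := by
    intro t; simp [circleMap]
  have h3 : (∫ t in (0:ℝ)..(2 * Real.pi), F (circleMap 0 r t))
      = ∫ t in (0:ℝ)..(2 * Real.pi), F ((r:ℂ) * Complex.exp (t * Complex.I)) := by
    apply intervalIntegral.integral_congr; intro t _; simp only [h2]
  rw [h3] at hcirc
  apply mul_left_cancel₀ Complex.I_ne_zero
  rw [hcirc, smul_eq_mul]; push_cast; ring

/-- DCT step: the truncated integrals tend to 2π. -/
lemma tendsto_min_integral (θ : ℂ → ℂ) (hθd : DifferentiableOn ℂ θ (Metric.ball (0:ℂ) 1))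
    (hθae : ∀ᵐ t : ℝ, Filter.Tendsto
      (fun r : ℝ => ‖θ ((r : ℝ) * Complex.exp (t * Complex.I))‖)
      (nhdsWithin 1 (Set.Iio 1)) (nhds 1))
    (K : ℝ) (hK : 1 ≤ K) :
    Tendsto (fun r : ℝ => ∫ t in (0:ℝ)..(2 * Real.pi),
        min ((‖θ ((r:ℂ) * Complex.exp (t * Complex.I))‖)⁻¹) K)
      (nhdsWithin 1 (Set.Iio 1)) (nhds (2 * Real.pi)) := by
  have h2π : (0:ℝ) ≤ 2 * Real.pi := by positivity
  have hmem : Ioo (0:ℝ) 1 ∈ nhdsWithin (1:ℝ) (Set.Iio 1) :=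
    Ioo_mem_nhdsLT_of_mem (by constructor <;> norm_num)
  have hball : ∀ r ∈ Ioo (0:ℝ) 1, ∀ t : ℝ,
      (r:ℂ) * Complex.exp (t * Complex.I) ∈ Metric.ball (0:ℂ) 1 := by
    intro r hr t
    simp only [Metric.mem_ball, dist_zero_right, norm_mul]
    rw [Complex.norm_exp_ofReal_mul_I, Complex.norm_real, Real.norm_eq_abs, abs_of_pos hr.1]
    simpa using hr.2
  have hcont : ∀ r ∈ Ioo (0:ℝ) 1,
      Continuous (fun t : ℝ => θ ((r:ℂ) * Complex.exp (t * Complex.I))) := by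
    intro r hr
    apply hθd.continuousOn.comp_continuous
    · exact continuous_const.mul (Complex.continuous_exp.comp
        (Complex.continuous_ofReal.mul continuous_const))
    · exact hball r hr
  have key := MeasureTheory.tendsto_integral_filter_of_dominated_convergence
    (μ := MeasureTheory.volume.restrict (Ioc (0:ℝ) (2 * Real.pi)))
    (l := nhdsWithin (1:ℝ) (Set.Iio 1))
    (F := fun (r : ℝ) (t : ℝ) =>
      min ((‖θ ((r:ℂ) * Complex.exp (t * Complex.I))‖)⁻¹) K)
    (f := fun _ => (1:ℝ)) (bound := fun _ => K)
    ?_ ?_ ?_ ?_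
  · have hval : (∫ _ in Ioc (0:ℝ) (2 * Real.pi), (1:ℝ)) = 2 * Real.pi := by
      simp [Real.volume_Ioc]
      positivity
    rw [hval] at key
    apply key.congr'
    filter_upwards [hmem] with r _
    rw [intervalIntegral.integral_of_le h2π]
  · filter_upwards [hmem] with r hr
    have : Measurable (fun t : ℝ =>
        min ((‖θ ((r:ℂ) * Complex.exp (t * Complex.I))‖)⁻¹) K) :=
      ((continuous_norm.comp (hcont r hr)).measurable.inv).min measurable_const
    exact this.aestronglyMeasurable
  · filter_upwards [hmem] with r hr
    apply Filter.Eventually.of_forall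
    intro t
    have h0 : (0:ℝ) ≤ min ((‖θ ((r:ℂ) * Complex.exp (t * Complex.I))‖)⁻¹) K :=
      le_min (inv_nonneg.2 (norm_nonneg _)) (le_trans zero_le_one hK)
    rw [Real.norm_eq_abs, _root_.abs_of_nonneg h0]
    exact min_le_right _ _
  · exact MeasureTheory.integrable_const K
  · apply MeasureTheory.ae_restrict_of_ae
    filter_upwards [hθae] with t ht
    have h1 : Tendsto (fun r : ℝ =>
        (‖θ ((r:ℂ) * Complex.exp (t * Complex.I))‖)⁻¹)
        (nhdsWithin 1 (Set.Iio 1)) (nhds 1) := by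
      have := ht.inv₀ one_ne_zero
      simpa using this
    have := h1.min (tendsto_const_nhds (x := K))
    simpa [min_eq_left hK] using this

/-- if `θH²` is invariant under every composition operator, then `θ` is a
unimodular constant. -/
theorem beurling_invariant_under_all_implies_constant
    (θ : ℂ → ℂ) (hθ : InnerFunction θ)
    (h : ∀ φ : ℂ → ℂ, SelfMapD φ → BeurlingInv θ φ) :
    ∃ α : ℂ, ‖α‖ = 1 ∧ ∀ z ∈ Metric.ball (0:ℂ) 1, θ z = α := by
  obtain ⟨hθd, hθb, hθae⟩ := hθ
  have h2π : (0:ℝ) < 2 * Real.pi := by positivity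
  have hball : ∀ r : ℝ, r ∈ Ioo (0:ℝ) 1 → ∀ t : ℝ,
      (r:ℂ) * Complex.exp (t * Complex.I) ∈ Metric.ball (0:ℂ) 1 := by
    intro r hr t
    simp only [Metric.mem_ball, dist_zero_right, norm_mul]
    rw [Complex.norm_exp_ofReal_mul_I, Complex.norm_real, Real.norm_eq_abs, abs_of_pos hr.1]
    simpa using hr.2
  have hIoo : Ioo (0:ℝ) 1 ∈ nhdsWithin (1:ℝ) (Set.Iio 1) :=
    Ioo_mem_nhdsLT_of_mem (by constructor <;> norm_num)
  -- θ is not identically zero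
  have hex : ∃ w ∈ Metric.ball (0:ℂ) 1, θ w ≠ 0 := by
    by_contra hcon
    push_neg at hcon
    obtain ⟨t₀, ht₀⟩ := hθae.exists
    have hev : ∀ᶠ r : ℝ in nhdsWithin (1:ℝ) (Set.Iio 1),
        ‖θ ((r:ℂ) * Complex.exp (t₀ * Complex.I))‖ = (0:ℝ) := by
      filter_upwards [hIoo] with r hr
      rw [hcon _ (hball r hr t₀), norm_zero]
    have h0 : Tendsto (fun r : ℝ => ‖θ ((r:ℂ) * Complex.exp (t₀ * Complex.I))‖)
        (nhdsWithin 1 (Set.Iio 1)) (nhds 0) :=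
      Tendsto.congr' (Filter.EventuallyEq.symm hev) tendsto_const_nhds
    have : (0:ℝ) = 1 := tendsto_nhds_unique h0 ht₀
    norm_num at this
  obtain ⟨w, hwball, hw0⟩ := hex
  have hφ : (DifferentiableOn ℂ (fun _ : ℂ => w) (Metric.ball (0:ℂ) 1) ∧
      Set.MapsTo (fun _ : ℂ => w) (Metric.ball (0:ℂ) 1) (Metric.ball (0:ℂ) 1)) :=
    ⟨differentiableOn_const _, fun z _ => hwball⟩
  have hf1 : (DifferentiableOn ℂ (fun _ : ℂ => (1:ℂ)) (Metric.ball (0:ℂ) 1) ∧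
      ∃ M : ℝ, ∀ r : ℝ, 0 ≤ r → r < 1 →
        (∫ t in (0:ℝ)..(2 * Real.pi),
          ‖(fun _ : ℂ => (1:ℂ)) ((r : ℂ) * Complex.exp (t * Complex.I))‖ ^ 2) ≤ M) := by
    refine ⟨differentiableOn_const _, 2 * Real.pi, fun r _ _ => ?_⟩
    simp
  obtain ⟨g, ⟨hgd, M, hgM⟩, hgθ⟩ := h _ hφ _ hf1
  have hgθ' : ∀ z ∈ Metric.ball (0:ℂ) 1, θ w = θ z * g z := by
    intro z hz
    simpa using hgθ z hz
  have hne : ∀ z ∈ Metric.ball (0:ℂ) 1, θ z ≠ 0 := by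
    intro z hz hz0
    apply hw0
    rw [hgθ' z hz, hz0, zero_mul]
  have habsw : 0 < ‖θ w‖ := norm_pos_iff.mpr hw0
  have hpt : ∀ z ∈ Metric.ball (0:ℂ) 1,
      (‖θ z‖)⁻¹ = ‖g z‖ / ‖θ w‖ := by
    intro z hz
    have h1 : ‖θ w‖ = ‖θ z‖ * ‖g z‖ := by
      rw [hgθ' z hz, norm_mul]
    field_simp [norm_ne_zero_iff.mpr (hne z hz)]
    linear_combination h1
  set C : ℝ := M / (‖θ w‖)^2 with hCdef
  have hSq : ∀ r ∈ Ioo (0:ℝ) 1,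
      (∫ t in (0:ℝ)..(2*Real.pi),
        ((‖θ ((r:ℂ) * Complex.exp (t * Complex.I))‖)⁻¹)^2) ≤ C := by
    intro r hr
    have heq : ∀ t ∈ Set.uIcc (0:ℝ) (2*Real.pi),
        ((‖θ ((r:ℂ) * Complex.exp (t * Complex.I))‖)⁻¹)^2
          = (‖g ((r:ℂ) * Complex.exp (t * Complex.I))‖)^2
            / (‖θ w‖)^2 := by
      intro t _
      rw [hpt _ (hball r hr t), div_pow]
    rw [intervalIntegral.integral_congr heq, intervalIntegral.integral_div, hCdef]
    gcongr
    exact hgM r hr.1.le hr.2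
  have hMV : ∀ r ∈ Ioo (0:ℝ) 1,
      2*Real.pi * (‖θ 0‖)⁻¹ ≤
        ∫ t in (0:ℝ)..(2*Real.pi),
          (‖θ ((r:ℂ) * Complex.exp (t * Complex.I))‖)⁻¹ := by
    intro r hr
    have hFd : DifferentiableOn ℂ (fun z => (θ z)⁻¹) (Metric.ball (0:ℂ) 1) :=
      hθd.inv hne
    have hmv := meanValue _ hFd r hr.1 hr.2
    calc 2*Real.pi * (‖θ 0‖)⁻¹
        = ‖∫ t in (0:ℝ)..(2*Real.pi),
            (θ ((r:ℂ) * Complex.exp (t * Complex.I)))⁻¹‖ := by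
          rw [hmv, norm_mul, norm_inv,
            show ((2:ℂ) * (Real.pi:ℂ)) = ((2*Real.pi : ℝ) : ℂ) by push_cast; ring,
            Complex.norm_real, Real.norm_eq_abs, _root_.abs_of_pos h2π]
      _ ≤ ∫ t in (0:ℝ)..(2*Real.pi),
            (‖θ ((r:ℂ) * Complex.exp (t * Complex.I))‖)⁻¹ := by
          have hni := intervalIntegral.norm_integral_le_integral_norm
            (f := fun t : ℝ => (θ ((r:ℂ) * Complex.exp (t * Complex.I)))⁻¹)
            (μ := MeasureTheory.volume) (a := 0) (b := 2*Real.pi) h2π.le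
          simpa [norm_inv] using hni
  have hub : 2*Real.pi * (‖θ 0‖)⁻¹ ≤ 2*Real.pi := by
    have hC0 : 0 ≤ C := le_trans
      (intervalIntegral.integral_nonneg h2π.le (fun t _ => sq_nonneg _))
      (hSq (1/2) (by norm_num))
    refine le_of_forall_pos_le_add ?_
    intro ε hε
    set K : ℝ := max 1 (2*C/ε) with hKdef
    have hK1 : (1:ℝ) ≤ K := le_max_left _ _
    have hK0 : (0:ℝ) < K := lt_of_lt_of_le one_pos hK1
    have hCK : C / K ≤ ε/2 := by
      rw [div_le_iff₀ hK0]
      have h2 : 2*C/ε ≤ K := le_max_right _ _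
      rw [div_le_iff₀ hε] at h2
      nlinarith
    have hev1 := (tendsto_min_integral θ hθd hθae K hK1).eventually_lt_const
      (show 2*Real.pi < 2*Real.pi + ε/2 by linarith)
    obtain ⟨r, hrlt, hr⟩ := (hev1.and hIoo).exists
    have hcontθ : Continuous (fun t : ℝ => θ ((r:ℂ) * Complex.exp (t * Complex.I))) := by
      apply hθd.continuousOn.comp_continuous
      · exact continuous_const.mul (Complex.continuous_exp.comp
          (Complex.continuous_ofReal.mul continuous_const))
      · exact hball r hr
    have hinv : Continuous (fun t : ℝ =>
        (‖θ ((r:ℂ) * Complex.exp (t * Complex.I))‖)⁻¹) :=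
      (continuous_norm.comp hcontθ).inv₀
        (fun t => norm_ne_zero_iff.mpr (hne _ (hball r hr t)))
    have hptK : ∀ t ∈ Set.Icc (0:ℝ) (2*Real.pi),
        (‖θ ((r:ℂ) * Complex.exp (t * Complex.I))‖)⁻¹ ≤
          min ((‖θ ((r:ℂ) * Complex.exp (t * Complex.I))‖)⁻¹) K
            + ((‖θ ((r:ℂ) * Complex.exp (t * Complex.I))‖)⁻¹)^2 / K := by
      intro t _
      set x := (‖θ ((r:ℂ) * Complex.exp (t * Complex.I))‖)⁻¹ with hx
      have hx0 : 0 ≤ x := inv_nonneg.2 (norm_nonneg _)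
      rcases le_total x K with hc | hc
      · rw [min_eq_left hc]
        have hq : 0 ≤ x^2/K := by positivity
        linarith
      · rw [min_eq_right hc]
        have hq : x ≤ x^2 / K := by
          rw [le_div_iff₀ hK0]
          nlinarith
        linarith
    have hint1 : IntervalIntegrable (fun t : ℝ =>
        (‖θ ((r:ℂ) * Complex.exp (t * Complex.I))‖)⁻¹)
        MeasureTheory.volume 0 (2*Real.pi) := hinv.intervalIntegrable _ _
    have hintmin : IntervalIntegrable (fun t : ℝ =>
        min ((‖θ ((r:ℂ) * Complex.exp (t * Complex.I))‖)⁻¹) K)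
        MeasureTheory.volume 0 (2*Real.pi) :=
      (hinv.min continuous_const).intervalIntegrable _ _
    have hintsq : IntervalIntegrable (fun t : ℝ =>
        ((‖θ ((r:ℂ) * Complex.exp (t * Complex.I))‖)⁻¹)^2 / K)
        MeasureTheory.volume 0 (2*Real.pi) :=
      ((hinv.pow 2).div_const K).intervalIntegrable _ _
    calc 2*Real.pi * (‖θ 0‖)⁻¹
        ≤ ∫ t in (0:ℝ)..(2*Real.pi),
            (‖θ ((r:ℂ) * Complex.exp (t * Complex.I))‖)⁻¹ := hMV r hr
      _ ≤ ∫ t in (0:ℝ)..(2*Real.pi),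
            (min ((‖θ ((r:ℂ) * Complex.exp (t * Complex.I))‖)⁻¹) K
              + ((‖θ ((r:ℂ) * Complex.exp (t * Complex.I))‖)⁻¹)^2 / K) :=
          intervalIntegral.integral_mono_on h2π.le hint1 (hintmin.add hintsq) hptK
      _ = (∫ t in (0:ℝ)..(2*Real.pi),
            min ((‖θ ((r:ℂ) * Complex.exp (t * Complex.I))‖)⁻¹) K)
          + (∫ t in (0:ℝ)..(2*Real.pi),
            ((‖θ ((r:ℂ) * Complex.exp (t * Complex.I))‖)⁻¹)^2) / K := by
          rw [intervalIntegral.integral_add hintmin hintsq, intervalIntegral.integral_div]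
      _ ≤ (2*Real.pi + ε/2) + C/K := by
          refine add_le_add hrlt.le ?_
          gcongr
          exact hSq r hr
      _ ≤ 2*Real.pi + ε := by linarith
  have habs0 : 0 < ‖θ 0‖ :=
    norm_pos_iff.mpr (hne 0 (Metric.mem_ball_self one_pos))
  have hone : 1 ≤ ‖θ 0‖ := by
    have hinv1 : (‖θ 0‖)⁻¹ ≤ 1 := by
      have h' : 2*Real.pi * (‖θ 0‖)⁻¹ ≤ 2*Real.pi * 1 := by linarith
      exact le_of_mul_le_mul_left h' h2π
    nlinarith [mul_inv_cancel₀ habs0.ne']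
  have hmax : Set.EqOn θ (Function.const ℂ (θ 0)) (Metric.ball (0:ℂ) 1) := by
    apply Complex.eqOn_of_isPreconnected_of_isMaxOn_norm
      (convex_ball (0:ℂ) 1).isPreconnected Metric.isOpen_ball hθd
      (Metric.mem_ball_self one_pos)
    intro z hz
    simp only [Function.comp_apply]
    exact le_trans (hθb z hz) hone
  exact ⟨θ 0, le_antisymm (hθb 0 (Metric.mem_ball_self one_pos)) hone,
    fun z hz => hmax hz⟩
end
end

section
/- Let φ be a holomorphic self-map of 𝔻 such that the model space Q_θ is invariant under C_φ for every inner function θ. Then φ is the identity map. -/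
open Complex Metric Filter Set

noncomputable section

/-- Iterated derivative of a two-term rational combination. -/
lemma iterDeriv_two (A c B c' : ℂ) (n : ℕ) :
    ∀ z : ℂ, 1 - c * z ≠ 0 → 1 - c' * z ≠ 0 →
      iteratedDeriv n (fun z => A * (1 - c * z)⁻¹ + B * (1 - c' * z)⁻¹) z
        = A * n.factorial * c ^ n * ((1 - c * z) ^ (n + 1))⁻¹
          + B * n.factorial * c' ^ n * ((1 - c' * z) ^ (n + 1))⁻¹ := by
  induction n with
  | zero => intro z h1 h2; simp [iteratedDeriv_zero]
  | succ n ih =>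
    intro z h1 h2
    rw [iteratedDeriv_succ]
    have hopen : IsOpen {w : ℂ | 1 - c * w ≠ 0 ∧ 1 - c' * w ≠ 0} := by
      apply IsOpen.inter
      · exact isOpen_ne.preimage (by continuity)
      · exact isOpen_ne.preimage (by continuity)
    have hmem : {w : ℂ | 1 - c * w ≠ 0 ∧ 1 - c' * w ≠ 0} ∈ nhds z :=
      hopen.mem_nhds ⟨h1, h2⟩
    have hEq : (iteratedDeriv n (fun z => A * (1 - c * z)⁻¹ + B * (1 - c' * z)⁻¹))
        =ᶠ[nhds z] (fun w => A * n.factorial * c ^ n * ((1 - c * w) ^ (n + 1))⁻¹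
          + B * n.factorial * c' ^ n * ((1 - c' * w) ^ (n + 1))⁻¹) := by
      filter_upwards [hmem] with w hw
      exact ih w hw.1 hw.2
    rw [hEq.deriv_eq]
    have D1 : HasDerivAt (fun w : ℂ => ((1 - c * w) ^ (n + 1))⁻¹)
        ((n+1) * c * ((1 - c * z) ^ (n + 2))⁻¹) z := by
      have hu : HasDerivAt (fun w : ℂ => 1 - c * w) (-c) z := by
        simpa using ((hasDerivAt_id z).const_mul c).const_sub 1
      have hp : HasDerivAt (fun w : ℂ => (1 - c * w) ^ (n + 1))
          ((n + 1 : ℕ) * (1 - c * z) ^ n * (-c)) z := by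
        simpa using (hu.fun_pow (n+1))
      have hne : (1 - c * z) ^ (n + 1) ≠ 0 := pow_ne_zero _ h1
      have := hp.inv hne
      refine this.congr_deriv ?_
      field_simp
      push_cast
      ring
    have D2 : HasDerivAt (fun w : ℂ => ((1 - c' * w) ^ (n + 1))⁻¹)
        ((n+1) * c' * ((1 - c' * z) ^ (n + 2))⁻¹) z := by
      have hu : HasDerivAt (fun w : ℂ => 1 - c' * w) (-c') z := by
        simpa using ((hasDerivAt_id z).const_mul c').const_sub 1
      have hp : HasDerivAt (fun w : ℂ => (1 - c' * w) ^ (n + 1))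
          ((n + 1 : ℕ) * (1 - c' * z) ^ n * (-c')) z := by
        simpa using (hu.fun_pow (n+1))
      have hne : (1 - c' * z) ^ (n + 1) ≠ 0 := pow_ne_zero _ h2
      have := hp.inv hne
      refine this.congr_deriv ?_
      field_simp
      push_cast
      ring
    have := ((D1.const_mul (A * n.factorial * c ^ n)).fun_add
      (D2.const_mul (B * n.factorial * c' ^ n))).deriv
    rw [this]
    simp only [Nat.factorial_succ]
    push_cast
    ring

lemma hcoef_two (A c B c' : ℂ) (n : ℕ) :
    hcoef (fun z => A * (1 - c * z)⁻¹ + B * (1 - c' * z)⁻¹) n = A * c ^ n + B * c' ^ n := by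
  have h := iterDeriv_two A c B c' n 0 (by simp) (by simp)
  simp only [mul_zero, sub_zero, one_pow, inv_one, mul_one] at h
  rw [hcoef, h]
  have : (n.factorial : ℂ) ≠ 0 := Nat.cast_ne_zero.mpr n.factorial_ne_zero
  field_simp

lemma hcoef_k (c : ℂ) (n : ℕ) : hcoef (fun z => (1 - c * z)⁻¹) n = c ^ n := by
  have h := hcoef_two 1 c 0 0 n
  simp only [one_mul, zero_mul, add_zero] at h
  rw [← h]

/-- Taylor expansion: HasSum of coefficients. -/
lemma hasSum_hcoef {f : ℂ → ℂ} (hf : DifferentiableOn ℂ f (Metric.ball 0 1))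
    {w : ℂ} (hw : w ∈ Metric.ball (0:ℂ) 1) :
    HasSum (fun n => hcoef f n * w ^ n) (f w) := by
  have := Complex.hasSum_taylorSeries_on_ball hf hw
  convert this using 2 with n
  · rfl
  rw [hcoef]
  simp [smul_eq_mul]
  ring

lemma one_sub_ne {c z : ℂ} (hc : ‖c‖ < 1) (hz : ‖z‖ ≤ 1) :
    1 - c * z ≠ 0 := by
  intro h
  have h1 : c * z = 1 := by linear_combination -h
  have : ‖c * z‖ < 1 := by
    rw [norm_mul]
    calc ‖c‖ * ‖z‖ ≤ ‖c‖ * 1 :=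
      mul_le_mul_of_nonneg_left hz (norm_nonneg c)
    _ < 1 := by rwa [mul_one]
  rw [h1] at this; simp at this

lemma abs_r_exp {r t : ℝ} (hr0 : 0 ≤ r) :
    ‖(r:ℂ) * Complex.exp (t * Complex.I)‖ = r := by
  rw [norm_mul, Complex.norm_exp_ofReal_mul_I, mul_one, Complex.norm_real, Real.norm_eq_abs,
    _root_.abs_of_nonneg hr0]

lemma k_diff {c : ℂ} (hc : ‖c‖ < 1) :
    DifferentiableOn ℂ (fun z => (1 - c * z)⁻¹) (Metric.ball (0:ℂ) 1) := by
  apply DifferentiableOn.inv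
  · exact (differentiableOn_const 1).sub ((differentiable_id.const_mul c).differentiableOn)
  · intro z hz
    exact one_sub_ne hc (le_of_lt (by simpa using mem_ball_zero_iff.mp hz))

lemma abs_one_sub_ge {c z : ℂ} (hz : ‖z‖ ≤ 1) :
    1 - ‖c‖ ≤ ‖1 - c * z‖ := by
  have h1 : ‖c * z‖ ≤ ‖c‖ := by
    rw [norm_mul]
    calc ‖c‖ * ‖z‖ ≤ ‖c‖ * 1 :=
      mul_le_mul_of_nonneg_left hz (norm_nonneg c)
    _ = ‖c‖ := mul_one _
  calc 1 - ‖c‖ ≤ 1 - ‖c * z‖ := by linarith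
  _ ≤ ‖1 - c * z‖ := by simpa using norm_sub_norm_le (1:ℂ) (c * z)

lemma k_hardy {c : ℂ} (hc : ‖c‖ < 1) :
    MemHardy2 (fun z => (1 - c * z)⁻¹) := by
  refine ⟨k_diff hc, 2 * Real.pi * ((1 - ‖c‖)⁻¹ ^ 2), ?_⟩
  intro r hr0 hr1
  have hpos : 0 < 1 - ‖c‖ := by
    have := norm_nonneg c; linarith
  have hb : ∀ t : ℝ, ‖(1 - c * ((r:ℂ) * Complex.exp (t * Complex.I)))⁻¹‖ ^ 2
      ≤ (1 - ‖c‖)⁻¹ ^ 2 := by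
    intro t
    have habs : ‖(r:ℂ) * Complex.exp (t * Complex.I)‖ ≤ 1 := by
      rw [abs_r_exp hr0]; linarith
    have hge := abs_one_sub_ge (c := c) habs
    rw [norm_inv]
    have h1 : (‖1 - c * ((r:ℂ) * Complex.exp (t * Complex.I))‖)⁻¹
        ≤ (1 - ‖c‖)⁻¹ := inv_anti₀ hpos hge
    have h0 : 0 ≤ (‖1 - c * ((r:ℂ) * Complex.exp (t * Complex.I))‖)⁻¹ :=
      inv_nonneg.mpr (norm_nonneg _)
    nlinarith
  have hcont : Continuous (fun t : ℝ =>
      ‖(1 - c * ((r:ℂ) * Complex.exp (t * Complex.I)))⁻¹‖ ^ 2) := by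
    apply Continuous.pow
    apply continuous_norm.comp
    apply Continuous.inv₀
    · continuity
    · intro t
      apply one_sub_ne hc
      rw [abs_r_exp hr0]; linarith
  calc (∫ t in (0:ℝ)..(2 * Real.pi),
      ‖(1 - c * ((r:ℂ) * Complex.exp (t * Complex.I)))⁻¹‖ ^ 2)
      ≤ ∫ _ in (0:ℝ)..(2 * Real.pi), (1 - ‖c‖)⁻¹ ^ 2 := by
        apply intervalIntegral.integral_mono_on Real.two_pi_pos.le
          (hcont.intervalIntegrable _ _) (intervalIntegrable_const)
        intro x _; exact hb x
  _ = 2 * Real.pi * ((1 - ‖c‖)⁻¹ ^ 2) := by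
        rw [intervalIntegral.integral_const]; simp

noncomputable def bMap (α : ℂ) : ℂ → ℂ :=
  fun z => (α - z) * (1 - (starRingEnd ℂ) α * z)⁻¹

lemma normSq_ineq (α z : ℂ) :
    Complex.normSq (1 - (starRingEnd ℂ) α * z) - Complex.normSq (α - z)
      = (1 - Complex.normSq α) * (1 - Complex.normSq z) := by
  simp only [Complex.normSq_apply, Complex.sub_re, Complex.sub_im, Complex.mul_re,
    Complex.mul_im, Complex.conj_re, Complex.conj_im, Complex.one_re, Complex.one_im]
  ring

lemma abs_num_le_den {α z : ℂ} (hα : ‖α‖ < 1) (hz : ‖z‖ ≤ 1) :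
    ‖α - z‖ ≤ ‖1 - (starRingEnd ℂ) α * z‖ := by
  have h1 : Complex.normSq (α - z) ≤ Complex.normSq (1 - (starRingEnd ℂ) α * z) := by
    have h2 := normSq_ineq α z
    have h3 : Complex.normSq α ≤ 1 := by
      rw [← Complex.sq_norm]; nlinarith [norm_nonneg α]
    have h4 : Complex.normSq z ≤ 1 := by
      rw [← Complex.sq_norm]; nlinarith [norm_nonneg z]
    nlinarith
  have := Real.sqrt_le_sqrt h1
  rwa [← Complex.norm_def, ← Complex.norm_def] at this

lemma abs_eq_on_circle {α : ℂ} (t : ℝ) :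
    ‖α - Complex.exp (t * Complex.I)‖
      = ‖1 - (starRingEnd ℂ) α * Complex.exp (t * Complex.I)‖ := by
  set E := Complex.exp ((t:ℂ) * Complex.I) with hE
  have habsE : ‖E‖ = 1 := Complex.norm_exp_ofReal_mul_I t
  have hEne : E ≠ 0 := by
    intro h; rw [h] at habsE; simp at habsE
  have key : (starRingEnd ℂ) (α - E) = -(E⁻¹ * (1 - (starRingEnd ℂ) α * E)) := by
    have hconjE : (starRingEnd ℂ) E = E⁻¹ := by
      rw [hE, ← Complex.exp_conj]
      simp only [map_mul, Complex.conj_ofReal, Complex.conj_I, mul_neg]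
      rw [← Complex.exp_neg]
    rw [map_sub, hconjE]
    field_simp
    ring
  calc ‖α - E‖ = ‖(starRingEnd ℂ) (α - E)‖ := (Complex.norm_conj _).symm
  _ = ‖E⁻¹‖ * ‖1 - (starRingEnd ℂ) α * E‖ := by
      rw [key, norm_neg, norm_mul]
  _ = ‖1 - (starRingEnd ℂ) α * E‖ := by
      rw [norm_inv, habsE]; simp

lemma bMap_inner {α : ℂ} (hα : ‖α‖ < 1) : InnerFunction (bMap α) := by
  have hcα : ‖(starRingEnd ℂ) α‖ < 1 := by rwa [Complex.norm_conj]
  refine ⟨?_, ?_, ?_⟩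
  · apply DifferentiableOn.mul
    · exact (differentiableOn_const α).sub differentiable_id.differentiableOn
    · apply DifferentiableOn.inv
      · exact (differentiableOn_const 1).sub
          ((differentiable_id.const_mul _).differentiableOn)
      · intro z hz
        exact one_sub_ne hcα (le_of_lt (by simpa using mem_ball_zero_iff.mp hz))
  · intro z hz
    have hz1 : ‖z‖ ≤ 1 := le_of_lt (by simpa using mem_ball_zero_iff.mp hz)
    have hden : 1 - (starRingEnd ℂ) α * z ≠ 0 := one_sub_ne hcα hz1
    rw [bMap, norm_mul, norm_inv]
    rw [inv_eq_one_div, mul_comm, div_mul_eq_mul_div, one_mul, div_le_one]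
    · exact abs_num_le_den hα hz1
    · exact norm_pos_iff.mpr hden
  · apply Filter.Eventually.of_forall
    intro t
    have hcont : ContinuousAt (fun r : ℝ =>
        ‖bMap α ((r:ℂ) * Complex.exp (t * Complex.I))‖) 1 := by
      apply continuous_norm.continuousAt.comp
      apply ContinuousAt.mul
      · exact (continuous_const.sub ((Complex.continuous_ofReal.mul continuous_const))).continuousAt
      · apply ContinuousAt.inv₀
        · exact (continuous_const.sub (continuous_const.mul
            (Complex.continuous_ofReal.mul continuous_const))).continuousAt
        · have : ‖((1:ℝ):ℂ) * Complex.exp (t * Complex.I)‖ ≤ 1 := by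
            rw [abs_r_exp zero_le_one]
          exact one_sub_ne hcα this
    have hval : ‖bMap α (((1:ℝ):ℂ) * Complex.exp (t * Complex.I))‖ = 1 := by
      rw [bMap]
      simp only [Complex.ofReal_one, one_mul]
      rw [norm_mul, norm_inv, ← abs_eq_on_circle t]
      have hne : (α - Complex.exp (t * Complex.I)) = 0 ∨ (α - Complex.exp (t * Complex.I)) ≠ 0 := em _
      rcases hne with h | h
      · exfalso
        have : ‖α‖ = 1 := by
          have : α = Complex.exp (t * Complex.I) := by linear_combination h
          rw [this, Complex.norm_exp_ofReal_mul_I]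
        linarith
      · exact div_self (norm_ne_zero_iff.mpr h)
    have := hcont.tendsto
    rw [hval] at this
    exact this.mono_left nhdsWithin_le_nhds

lemma mem_ball_abs {z : ℂ} (hz : z ∈ Metric.ball (0:ℂ) 1) : ‖z‖ < 1 := by
  simpa using mem_ball_zero_iff.mp hz

lemma abs_conj_lt {α : ℂ} (hα : ‖α‖ < 1) :
    ‖(starRingEnd ℂ) α‖ < 1 := by rwa [Complex.norm_conj]

/-- conj commutes with HasSum -/
lemma hasSum_conj' {f : ℕ → ℂ} {a : ℂ} (h : HasSum f a) :
    HasSum (fun n => (starRingEnd ℂ) (f n)) ((starRingEnd ℂ) a) :=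
  h.map ((starRingEnd ℂ) : ℂ →+* ℂ).toAddMonoidHom Complex.continuous_conj

/-- The kernel is in the model space of bMap α. -/
lemma k_mem_model {α : ℂ} (hα : ‖α‖ < 1) :
    MemModel (bMap α) (fun z => (1 - (starRingEnd ℂ) α * z)⁻¹) := by
  refine ⟨k_hardy (abs_conj_lt hα), ?_⟩
  intro g hg
  have hαball : α ∈ Metric.ball (0:ℂ) 1 := by simpa [mem_ball_zero_iff] using hα
  -- h := bMap α * g is differentiable on the ball and vanishes at α
  have hdiff : DifferentiableOn ℂ (fun z => bMap α z * g z) (Metric.ball (0:ℂ) 1) := by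
    apply DifferentiableOn.mul _ hg.1
    apply DifferentiableOn.mul
    · exact (differentiableOn_const α).sub differentiable_id.differentiableOn
    · apply DifferentiableOn.inv
      · exact (differentiableOn_const 1).sub ((differentiable_id.const_mul _).differentiableOn)
      · intro z hz
        exact one_sub_ne (abs_conj_lt hα) (mem_ball_abs hz).le
  have hval : (fun z => bMap α z * g z) α = 0 := by simp [bMap]
  have hsum : HasSum (fun n => hcoef (fun z => bMap α z * g z) n * α ^ n) 0 := by
    have h0 : bMap α α * g α = 0 := by simp [bMap]
    have := hasSum_hcoef hdiff hαball
    rwa [h0] at this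
  have hsum2 : HasSum (fun n =>
      hcoef (fun z => (1 - (starRingEnd ℂ) α * z)⁻¹) n
        * (starRingEnd ℂ) (hcoef (fun z => bMap α z * g z) n)) 0 := by
    have := hasSum_conj' hsum
    rw [map_zero] at this
    convert this using 2 with n
    rw [hcoef_k, map_mul, map_pow]
    ring
  exact hsum2.tsum_eq

/-- Classification: members of the model space are multiples of the kernel. -/
lemma model_classify {α : ℂ} (hα : ‖α‖ < 1) (hα0 : α ≠ 0) {f : ℂ → ℂ}
    (hf : MemModel (bMap α) f) :
    ∀ w ∈ Metric.ball (0:ℂ) 1,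
      f w = (1 - (starRingEnd ℂ) α * w)⁻¹ * ((1 - (starRingEnd ℂ) α * α) * f α) := by
  intro w hw
  have hαball : α ∈ Metric.ball (0:ℂ) 1 := by simpa [mem_ball_zero_iff] using hα
  have hdenα : 1 - (starRingEnd ℂ) α * α ≠ 0 := one_sub_ne (abs_conj_lt hα) hα.le
  have hdenw : 1 - (starRingEnd ℂ) α * w ≠ 0 :=
    one_sub_ne (abs_conj_lt hα) (mem_ball_abs hw).le
  by_cases hwα : w = α
  · subst hwα
    field_simp
  -- abbreviations
  set c := (starRingEnd ℂ) α
  set c' := (starRingEnd ℂ) w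
  have hcc' : c - c' ≠ 0 := by
    intro h
    apply hwα
    have : c = c' := by linear_combination h
    have := congrArg (starRingEnd ℂ) this
    simpa [c, c'] using this.symm
  have hαc' : 1 - α * c' ≠ 0 := by
    apply one_sub_ne hα
    show ‖(starRingEnd ℂ) w‖ ≤ 1
    rw [Complex.norm_conj]
    exact (mem_ball_abs hw).le
  set B := (1 - α * c') / (c - c') with hB
  set A := α - B with hA
  -- pointwise identity on the ball
  have hptwise : ∀ z ∈ Metric.ball (0:ℂ) 1,
      bMap α z * (1 - c' * z)⁻¹ = A * (1 - c * z)⁻¹ + B * (1 - c' * z)⁻¹ := by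
    intro z hz
    have h1 : 1 - c * z ≠ 0 := one_sub_ne (abs_conj_lt hα) (mem_ball_abs hz).le
    have h2 : 1 - c' * z ≠ 0 :=
      one_sub_ne (abs_conj_lt (mem_ball_abs hw)) (mem_ball_abs hz).le
    rw [bMap, hA, hB, show (starRingEnd ℂ) α = c from rfl]
    rw [eq_comm, ← sub_eq_zero]
    field_simp
    ring
  -- hcoef of the product
  have hcoefs : ∀ n, hcoef (fun z => bMap α z * (1 - c' * z)⁻¹) n = A * c ^ n + B * c' ^ n := by
    intro n
    have hEq : (fun z => bMap α z * (1 - c' * z)⁻¹)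
        =ᶠ[nhds 0] (fun z => A * (1 - c * z)⁻¹ + B * (1 - c' * z)⁻¹) := by
      filter_upwards [Metric.isOpen_ball.mem_nhds (Metric.mem_ball_self one_pos)] with z hz
      exact hptwise z hz
    rw [hcoef, hEq.iteratedDeriv_eq, ← hcoef, hcoef_two]
  -- evaluate hInner
  have horth := hf.2 (fun z => (1 - c' * z)⁻¹) (k_hardy (abs_conj_lt (mem_ball_abs hw)))
  have hsums : HasSum (fun n => hcoef f n * (starRingEnd ℂ) (A * c ^ n + B * c' ^ n))
      ((starRingEnd ℂ) A * f α + (starRingEnd ℂ) B * f w) := by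
    have h1 := (hasSum_hcoef hf.1.1 hαball).mul_left ((starRingEnd ℂ) A)
    have h2 := (hasSum_hcoef hf.1.1 hw).mul_left ((starRingEnd ℂ) B)
    have := h1.add h2
    convert this using 2 with n
    · rfl
    simp only [map_add, map_mul, map_pow, Complex.conj_conj, c, c']
    ring
  have hz : (starRingEnd ℂ) A * f α + (starRingEnd ℂ) B * f w = 0 := by
    rw [← hsums.tsum_eq, ← horth, hInner]
    congr 1
    ext n
    rw [hcoefs n]
  -- now solve for f w
  have hcB : (starRingEnd ℂ) B = (1 - c * w) / (α - w) := by
    rw [hB]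
    simp only [map_div₀, map_sub, map_one, map_mul, Complex.conj_conj, c, c']
  have hcA : (starRingEnd ℂ) A = c - (starRingEnd ℂ) B := by
    rw [hA, map_sub]
  have hαw : α - w ≠ 0 := sub_ne_zero.mpr (Ne.symm hwα)
  rw [hcA, hcB] at hz
  have h5 : (1 - c * w) * f w = (1 - c * α) * f α := by
    field_simp at hz
    linear_combination hz
  field_simp
  linear_combination h5

theorem all_model_invariant_implies_identity
    (φ : ℂ → ℂ) (hφ : SelfMapD φ)
    (h : ∀ θ : ℂ → ℂ, InnerFunction θ → ModelInv θ φ) :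
    ∀ z ∈ Metric.ball (0:ℂ) 1, φ z = z := by
  have key : ∀ α : ℂ, ‖α‖ < 1 → α ≠ 0 → ∀ w ∈ Metric.ball (0:ℂ) 1,
      1 - (starRingEnd ℂ) α * φ w = (1 - (starRingEnd ℂ) α * w) *
        ((1 - (starRingEnd ℂ) α * α)⁻¹ * (1 - (starRingEnd ℂ) α * φ α)) := by
    intro α hα hα0 w hw
    set c := (starRingEnd ℂ) α with hc
    have hαball : α ∈ Metric.ball (0:ℂ) 1 := by simpa [mem_ball_zero_iff] using hα
    have hmodel := (h (bMap α) (bMap_inner hα)) _ (k_mem_model hα)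
    have hcl := model_classify hα hα0 hmodel w hw
    -- hcl : (1 - c * φ w)⁻¹ = (1 - c * w)⁻¹ * ((1 - c * α) * (1 - c * φ α)⁻¹)
    have h1 : 1 - c * φ w ≠ 0 :=
      one_sub_ne (abs_conj_lt hα) (mem_ball_abs (hφ.2 hw)).le
    have h2 : 1 - c * w ≠ 0 := one_sub_ne (abs_conj_lt hα) (mem_ball_abs hw).le
    have h3 : 1 - c * φ α ≠ 0 :=
      one_sub_ne (abs_conj_lt hα) (mem_ball_abs (hφ.2 hαball)).le
    have h4 : 1 - c * α ≠ 0 := one_sub_ne (abs_conj_lt hα) hα.le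
    rw [← hc] at hcl
    field_simp at hcl ⊢
    linear_combination -hcl
  have hc2 : (starRingEnd ℂ) (1/2 : ℂ) = 1/2 := by norm_num [map_div₀, map_ofNat]
  have hc3 : (starRingEnd ℂ) (1/3 : ℂ) = 1/3 := by norm_num [map_div₀, map_ofNat]
  have ha2 : ‖(1/2 : ℂ)‖ < 1 := by
    rw [norm_div]; simp; norm_num
  have ha3 : ‖(1/3 : ℂ)‖ < 1 := by
    rw [norm_div]; simp; norm_num
  have h0b : (0:ℂ) ∈ Metric.ball (0:ℂ) 1 := Metric.mem_ball_self one_pos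
  have hhb : (1/2:ℂ) ∈ Metric.ball (0:ℂ) 1 := by
    rw [mem_ball_zero_iff]; simpa using ha2
  have e2 := key (1/2) ha2 (by norm_num)
  have e3 := key (1/3) ha3 (by norm_num)
  rw [hc2] at e2
  rw [hc3] at e3
  set D := (1 - (1/2 : ℂ) * (1/2))⁻¹ * (1 - (1/2 : ℂ) * φ (1/2)) with hD
  set E := (1 - (1/3 : ℂ) * (1/3))⁻¹ * (1 - (1/3 : ℂ) * φ (1/3)) with hE
  have E0 := e2 0 h0b
  have E0' := e3 0 h0b
  have Eh := e2 (1/2) hhb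
  have Eh' := e3 (1/2) hhb
  have hD1 : D = 1 := by
    linear_combination (-10 : ℂ) * E0 + 15 * E0' + 12 * Eh + (-18 : ℂ) * Eh'
  intro z hz
  have ez := e2 z hz
  linear_combination (-2 : ℂ) * ez + (z - 2) * hD1
end
end

section
/- A linear fractional transformation φ(z) = (az+b)/(cz+d) maps the open unit disc 𝔻 into itself if and only if |b·conj(d) − a·conj(c)| + |ad − bc| ≤ |d|² − |c|². -/
open Complex Metric Filter Set ComplexConjugate

noncomputable section

lemma key_idC (a b c d w : ℂ) :
    (d * conj d - c * conj c) * ((a - c*w) * conj (a - c*w) - (d*w - b) * conj (d*w-b)) =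
      (a*d - b*c) * conj (a*d - b*c) -
        ((d*conj d - c*conj c)*w - (b*conj d - a*conj c)) *
          conj ((d*conj d - c*conj c)*w - (b*conj d - a*conj c)) := by
  simp only [map_sub, map_mul, Complex.conj_conj]
  ring

lemma key_id (a b c d w : ℂ) :
    (normSq d - normSq c) * (normSq (a - c*w) - normSq (d*w - b)) =
      normSq (a*d - b*c) -
        normSq (((normSq d - normSq c : ℝ) : ℂ)*w - (b*conj d - a*conj c)) := by
  have h := key_idC a b c d w
  rw [← Complex.ofReal_inj]
  push_cast
  rw [← Complex.mul_conj, ← Complex.mul_conj, ← Complex.mul_conj, ← Complex.mul_conj]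
  convert h using 3 <;> push_cast [← Complex.mul_conj] <;> ring

/-- a linear fractional transformation maps `𝔻` into itself iff
`|b·conj(d) - a·conj(c)| + |ad - bc| ≤ |d|² - |c|²`. -/
theorem lft_self_map_iff
    (a b c d : ℂ) (hden : ∀ z ∈ Metric.ball (0:ℂ) 1, c * z + d ≠ 0)
    (hdet : a * d - b * c ≠ 0) :
    (∀ z ∈ Metric.ball (0:ℂ) 1, (a * z + b) / (c * z + d) ∈ Metric.ball (0:ℂ) 1) ↔
      ‖b * (starRingEnd ℂ) d - a * (starRingEnd ℂ) c‖ +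
        ‖a * d - b * c‖ ≤ ‖d‖ ^ 2 - ‖c‖ ^ 2 := by
  have hqpos : 0 < ‖a*d - b*c‖ := norm_pos_iff.mpr hdet
  set q : ℂ := a * d - b * c with hqdef
  set p : ℂ := b * conj d - a * conj c with hpdef
  have hB2 : ‖d‖ ^ 2 - ‖c‖ ^ 2 = normSq d - normSq c := by
    rw [Complex.sq_norm, Complex.sq_norm]
  set B : ℝ := normSq d - normSq c with hBdef
  rw [hB2]
  have key : ∀ w : ℂ, B * (normSq (a - c*w) - normSq (d*w - b)) =
      normSq q - normSq ((B:ℂ)*w - p) := fun w => key_id a b c d w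
  constructor
  · intro h
    -- Step A : 0 < B
    have hd0 : d ≠ 0 := by
      have h0 := hden 0 (by simp)
      simpa using h0
    have hB : 0 < B := by
      rcases lt_trichotomy (‖c‖) (‖d‖) with hcd | hcd | hcd
      · have := norm_nonneg c
        rw [hBdef, ← Complex.sq_norm, ← Complex.sq_norm]
        nlinarith
      · -- |c| = |d| : derive contradiction
        exfalso
        have hc0 : c ≠ 0 := by
          intro h0
          rw [h0] at hcd
          simp at hcd
          exact hd0 (by simpa [map_eq_zero] using hcd.symm)
        have hcpos : 0 < ‖c‖ := norm_pos_iff.mpr hc0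
        have hdpos : 0 < ‖d‖ := norm_pos_iff.mpr hd0
        obtain ⟨δ, hδpos, hδle, hδbound⟩ :
            ∃ δ : ℝ, 0 < δ ∧ δ ≤ 1/2 ∧
              (‖a*d‖ + ‖c*d‖) * δ < ‖q‖ := by
          set M : ℝ := ‖a*d‖ + ‖c*d‖ with hMdef
          have hM : 0 ≤ M := by positivity
          refine ⟨min (1/2) (‖q‖ / (2*M + 1)), lt_min (by norm_num) (by positivity),
            min_le_left _ _, ?_⟩
          have h1 : min (1/2) (‖q‖ / (2*M + 1)) ≤ ‖q‖ / (2*M + 1) :=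
            min_le_right _ _
          have h2 : M * (‖q‖ / (2*M + 1)) < ‖q‖ := by
            rw [mul_div_assoc'] at *
            rw [div_lt_iff₀ (by linarith)]
            nlinarith
          nlinarith [mul_le_mul_of_nonneg_left h1 hM]
        set z : ℂ := -(d/c) * ((1 - δ : ℝ) : ℂ) with hzdef
        have habsz : ‖z‖ = 1 - δ := by
          rw [hzdef, norm_mul, norm_neg, norm_div, hcd, div_self hdpos.ne',
            Complex.norm_real, Real.norm_eq_abs, _root_.abs_of_nonneg (by linarith), one_mul]
        have hzball : z ∈ Metric.ball (0:ℂ) 1 := by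
          rw [Metric.mem_ball, dist_zero_right, habsz]
          linarith
        have hmem := h z hzball
        rw [Metric.mem_ball, dist_zero_right] at hmem
        have hden1 : c * z + d = d * ((δ : ℝ) : ℂ) := by
          rw [hzdef]
          field_simp
          push_cast
          ring
        have hnum1 : a * z + b = (b*c - a*d*((1 - δ : ℝ) : ℂ)) / c := by
          rw [hzdef]
          field_simp
          ring
        rw [hnum1, hden1, norm_div, norm_div, norm_mul, Complex.norm_real, Real.norm_eq_abs,
          abs_of_pos hδpos, div_lt_one (by positivity), div_lt_iff₀ hcpos] at hmem
        -- hmem : |b*c - a*d*(1-δ)| < |d|*δ*|c|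
        have hsplit : (b*c - a*d : ℂ) =
            (b*c - a*d*((1 - δ : ℝ) : ℂ)) + (a*d*((1 - δ : ℝ) : ℂ) - a*d) := by ring
        have htri : ‖b*c - a*d‖ ≤
            ‖b*c - a*d*((1 - δ : ℝ) : ℂ)‖ +
              ‖a*d*((1 - δ : ℝ) : ℂ) - a*d‖ := by
          rw [hsplit]
          exact norm_add_le _ _
        have hq' : ‖b*c - a*d‖ = ‖q‖ := by
          rw [hqdef, ← norm_neg]
          ring_nf
        have hY : ‖a*d*((1 - δ : ℝ) : ℂ) - a*d‖ = ‖a*d‖ * δ := by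
          have : a*d*((1 - δ : ℝ) : ℂ) - a*d = (a*d) * ((-δ : ℝ) : ℂ) := by
            push_cast
            ring
          rw [this, norm_mul, Complex.norm_real, Real.norm_eq_abs, abs_neg, abs_of_pos hδpos]
        have hcd2 : ‖c*d‖ = ‖d‖ * ‖c‖ := by
          rw [norm_mul]; ring
        rw [hq', hY] at htri
        nlinarith
      · -- |d| < |c| : contradiction with hden
        exfalso
        have hc0 : c ≠ 0 := by
          intro h0; rw [h0] at hcd; simp at hcd
          exact absurd hcd (not_lt.2 (norm_nonneg d))
        have : (-(d/c)) ∈ Metric.ball (0:ℂ) 1 := by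
          rw [Metric.mem_ball, dist_zero_right, norm_neg, norm_div]
          rw [div_lt_one (norm_pos_iff.mpr hc0)]
          exact hcd
        have h2 := hden _ this
        apply h2
        field_simp
        ring
    -- Step B : every w with |Bw - p| < |q| satisfies |w| < 1
    have hw : ∀ w : ℂ, ‖(B:ℂ)*w - p‖ < ‖q‖ → ‖w‖ < 1 := by
      intro w hlt
      have hns : normSq ((B:ℂ)*w - p) < normSq q := by
        rw [← Complex.sq_norm, ← Complex.sq_norm]
        have := norm_nonneg ((B:ℂ)*w - p)
        nlinarith
      have hk := key w
      have hpos : normSq (d*w - b) < normSq (a - c*w) := by nlinarith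
      have hac : a - c*w ≠ 0 := by
        intro h0
        rw [h0] at hpos
        simp at hpos
        exact absurd hpos (not_lt.2 (normSq_nonneg _))
      set z : ℂ := (d*w - b) / (a - c*w) with hzdef
      have hzball : z ∈ Metric.ball (0:ℂ) 1 := by
        rw [Metric.mem_ball, dist_zero_right, hzdef, norm_div]
        rw [div_lt_one (norm_pos_iff.mpr hac)]
        have h1 := norm_nonneg (d*w - b)
        rw [← Complex.sq_norm, ← Complex.sq_norm] at hpos
        nlinarith [norm_nonneg (a - c*w)]
      have hczd : c * z + d ≠ 0 := hden z hzball
      have hval : (a * z + b) / (c * z + d) = w := by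
        rw [div_eq_iff hczd, hzdef]
        linear_combination div_mul_cancel₀ (d*w - b) hac
      have := h z hzball
      rw [hval, Metric.mem_ball, dist_zero_right] at this
      exact this
    -- Step C : conclude the inequality
    by_contra hlt
    push_neg at hlt
    obtain ⟨s, hs0, hs1, hsB⟩ : ∃ s : ℝ, 0 < s ∧ s < ‖q‖ ∧ B < ‖p‖ + s := by
      refine ⟨(max (B - ‖p‖) 0 + ‖q‖) / 2, ?_, ?_, ?_⟩
      · have := le_max_right (B - ‖p‖) 0
        positivity
      · have h1 : B - ‖p‖ < ‖q‖ := by linarith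
        have h2 : max (B - ‖p‖) 0 < ‖q‖ := max_lt h1 hqpos
        linarith
      · have := le_max_left (B - ‖p‖) 0
        linarith
    obtain ⟨u, habsu, habspu⟩ : ∃ u : ℂ, ‖u‖ = 1 ∧
        ‖p + (s:ℂ) * u‖ = ‖p‖ + s := by
      by_cases hp : p = 0
      · exact ⟨1, by simp, by simp [hp, Complex.norm_real, Real.norm_eq_abs, abs_of_pos hs0]⟩
      · have happ : 0 < ‖p‖ := norm_pos_iff.mpr hp
        have hcne : ((‖p‖ : ℝ) : ℂ) ≠ 0 := by
          simp only [ne_eq, Complex.ofReal_eq_zero]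
          exact happ.ne'
        refine ⟨p / (‖p‖ : ℂ), ?_, ?_⟩
        · rw [norm_div, Complex.norm_real, Real.norm_eq_abs, abs_of_pos happ, div_self happ.ne']
        · have hre : p + (s:ℂ) * (p / (‖p‖ : ℂ)) =
              p * (((‖p‖ + s : ℝ)) : ℂ) / ((‖p‖ : ℝ) : ℂ) := by
            field_simp
            push_cast
            ring
          rw [hre, norm_div, norm_mul, Complex.norm_real, Real.norm_eq_abs, Complex.norm_real, Real.norm_eq_abs,
            abs_of_pos (by positivity), abs_of_pos happ]
          field_simp
    have hBne : (B:ℂ) ≠ 0 := by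
      simp only [ne_eq, Complex.ofReal_eq_zero]
      exact hB.ne'
    have hBw : (B:ℂ) * ((p + (s:ℂ) * u) / (B:ℂ)) - p = (s:ℂ) * u := by
      field_simp
      ring
    have hwlt := hw ((p + (s:ℂ) * u) / (B:ℂ)) (by
      rw [hBw, norm_mul, habsu, Complex.norm_real, Real.norm_eq_abs, abs_of_pos hs0, mul_one]
      exact hs1)
    rw [norm_div, habspu, Complex.norm_real, Real.norm_eq_abs, abs_of_pos hB, div_lt_one hB] at hwlt
    linarith
  · -- reverse direction
    intro hineq z hz
    have hB : 0 < B := by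
      have := norm_nonneg p
      linarith
    have hczd : c * z + d ≠ 0 := hden z hz
    rw [Metric.mem_ball, dist_zero_right] at hz
    set w : ℂ := (a*z + b) / (c*z + d) with hwdef
    have h1 : a - c*w = q / (c*z + d) := by
      rw [hwdef]
      field_simp
      ring
    have h2 : d*w - b = q * z / (c*z + d) := by
      rw [hwdef, eq_div_iff hczd, hqdef]
      linear_combination d * div_mul_cancel₀ (a*z+b) hczd
    have hnsz : normSq z < 1 := by
      rw [← Complex.sq_norm]
      nlinarith [norm_nonneg z]
    have hnspos : 0 < normSq (a - c*w) - normSq (d*w - b) := by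
      rw [h1, h2, map_div₀, map_div₀, map_mul, div_sub_div_same]
      have hd1 : 0 < normSq (c*z + d) := normSq_pos.2 hczd
      have hq1 : 0 < normSq q := normSq_pos.2 hdet
      apply div_pos _ hd1
      nlinarith
    have hk := key w
    have hns : normSq ((B:ℂ)*w - p) < normSq q := by nlinarith
    have habs : ‖(B:ℂ)*w - p‖ < ‖q‖ := by
      rw [← Complex.sq_norm, ← Complex.sq_norm] at hns
      nlinarith [norm_nonneg ((B:ℂ)*w - p), norm_nonneg q]
    have hBw : B * ‖w‖ ≤ ‖p‖ + ‖(B:ℂ)*w - p‖ := by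
      calc B * ‖w‖ = ‖(B:ℂ)*w‖ := by
            rw [norm_mul, Complex.norm_real, Real.norm_eq_abs, abs_of_pos hB]
          _ = ‖p + ((B:ℂ)*w - p)‖ := by ring_nf
          _ ≤ ‖p‖ + ‖(B:ℂ)*w - p‖ := norm_add_le _ _
    have hlt : B * ‖w‖ < B := by linarith
    rw [Metric.mem_ball, dist_zero_right]
    show ‖w‖ < 1
    nlinarith
end
end

section
/- Let φ(z) = (az+b)/(cz+d) with ad − bc = 1 be a nonconstant holomorphic self-map of 𝔻. Then σ(z) = (conj(a)z − conj(c))/(−conj(b)z + conj(d)) is also a holomorphic self-map of 𝔻. -/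
open Complex Metric Filter Set

noncomputable section

private lemma cowen_key (a b c d : ℂ) (hdet : a * d - b * c = 1)
    (hden : ∀ z ∈ Metric.ball (0:ℂ) 1, c * z + d ≠ 0)
    (hφ : ∀ z ∈ Metric.ball (0:ℂ) 1, (a * z + b) / (c * z + d) ∈ Metric.ball (0:ℂ) 1)
    (w : ℂ) (hw : ‖w‖ < 1) : ‖a * w - c‖ < ‖d - b * w‖ := by
  have hb : ∀ x ∈ Metric.ball (0:ℂ) 1, ‖a*x+b‖ < ‖c*x+d‖ := by
    intro x hx
    have h1 := hφ x hx
    rw [mem_ball_zero_iff, norm_div, div_lt_one (norm_pos_iff.2 (hden x hx))] at h1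
    exact h1
  have hb' : ∀ v : ℂ, ‖v‖ ≤ 1 → ‖a*v+b‖ ≤ ‖c*v+d‖ := by
    intro v hv
    have hvcl : v ∈ closure (Metric.ball (0:ℂ) 1) := by
      rw [closure_ball (0:ℂ) one_ne_zero]; exact mem_closedBall_zero_iff.2 hv
    have hne : (nhdsWithin v (Metric.ball (0:ℂ) 1)).NeBot :=
      mem_closure_iff_nhdsWithin_neBot.mp hvcl
    have hc : Tendsto (fun x => ‖a*x+b‖ - ‖c*x+d‖) (nhdsWithin v (Metric.ball (0:ℂ) 1))
        (nhds (‖a*v+b‖ - ‖c*v+d‖)) :=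
      ((Continuous.tendsto (by continuity) v)).mono_left nhdsWithin_le_nhds
    have h2 : ‖a*v+b‖ - ‖c*v+d‖ ≤ 0 := by
      refine le_of_tendsto hc ?_
      filter_upwards [self_mem_nhdsWithin] with x hx
      linarith [hb x hx]
    linarith
  by_contra hcon
  push_neg at hcon
  by_cases hw0 : w = 0
  · subst hw0
    simp only [mul_zero, zero_sub, norm_neg, sub_zero] at hcon
    have hc0 : c ≠ 0 := by
      intro h
      have hd0 : d ≠ 0 := by simpa using hden 0 (by simp)
      rw [h, norm_zero] at hcon
      exact hd0 (norm_le_zero_iff.1 hcon)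
    have hv : ‖-(d/c)‖ ≤ 1 := by
      rw [norm_neg, norm_div, div_le_one (norm_pos_iff.2 hc0)]
      exact hcon
    have h3 := hb' _ hv
    have h4 : c * -(d/c) + d = 0 := by field_simp; ring
    rw [h4, norm_zero] at h3
    have h5 : a * -(d/c) + b = 0 := norm_le_zero_iff.1 h3
    have h6 : a * d - b * c = 0 := by
      field_simp at h5
      linear_combination -h5
    exact zero_ne_one (h6.symm.trans hdet)
  · set u : ℂ := w⁻¹ with hu
    have hwpos : (0:ℝ) < ‖w‖ := norm_pos_iff.2 hw0
    have hu1 : 1 < ‖u‖ := by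
      rw [hu, norm_inv]
      exact (one_lt_inv₀ hwpos).2 hw
    have hwu : w * u = 1 := mul_inv_cancel₀ hw0
    have e1 : a * w - c = w * (a - c * u) := by
      rw [mul_sub, mul_comm w (c*u), mul_assoc, mul_comm u w, hwu, mul_one, mul_comm a w]
    have e2 : d - b * w = w * (d * u - b) := by
      rw [mul_sub, mul_comm w (d*u), mul_assoc, mul_comm u w, hwu, mul_one, mul_comm b w]
    rw [e1, e2, norm_mul, norm_mul] at hcon
    have hcon2 : ‖d * u - b‖ ≤ ‖a - c * u‖ := le_of_mul_le_mul_left hcon hwpos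
    by_cases hac : a - c * u = 0
    · have hdb : d * u - b = 0 := by
        rw [hac, norm_zero] at hcon2
        exact norm_le_zero_iff.1 hcon2
      have h6 : a * d - b * c = 0 := by
        rw [sub_eq_zero.mp hac, ← sub_eq_zero.mp hdb]; ring
      exact zero_ne_one (h6.symm.trans hdet)
    · set v : ℂ := (d * u - b) / (a - c * u) with hv
      have hvle : ‖v‖ ≤ 1 := by
        rw [hv, norm_div, div_le_one (norm_pos_iff.2 hac)]
        exact hcon2
      have hcv : c * v + d = (a - c * u)⁻¹ := by
        rw [hv]; field_simp; linear_combination hdet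
      have hav : a * v + b = u * (a - c * u)⁻¹ := by
        rw [hv]; have hX := mul_inv_cancel₀ hac; linear_combination (u * (a - c * u)⁻¹) * hdet - b * hX
      have h3 := hb' v hvle
      rw [hcv, hav, norm_mul] at h3
      have hinv : (0:ℝ) < ‖(a - c*u)⁻¹‖ := norm_pos_iff.2 (inv_ne_zero hac)
      nlinarith [h3, hinv, hu1]

/-- if `φ = (az+b)/(cz+d)` with `ad - bc = 1` is a holomorphic self-map of
`𝔻`, then `σ(z) = (conj(a)z - conj(c))/(-conj(b)z + conj(d))` is also a holomorphic
self-map of `𝔻`. -/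
theorem cowen_sigma_self_map
    (a b c d : ℂ) (hdet : a * d - b * c = 1)
    (hden : ∀ z ∈ Metric.ball (0:ℂ) 1, c * z + d ≠ 0)
    (hφ : ∀ z ∈ Metric.ball (0:ℂ) 1, (a * z + b) / (c * z + d) ∈ Metric.ball (0:ℂ) 1) :
    SelfMapD (fun z => ((starRingEnd ℂ) a * z - (starRingEnd ℂ) c) /
      (-(starRingEnd ℂ) b * z + (starRingEnd ℂ) d)) := by
  have hDk : ∀ z ∈ Metric.ball (0:ℂ) 1,
      ‖(starRingEnd ℂ) a * z - (starRingEnd ℂ) c‖ <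
      ‖-(starRingEnd ℂ) b * z + (starRingEnd ℂ) d‖ := by
    intro z hz
    have hz' : ‖(starRingEnd ℂ) z‖ < 1 := by
      rw [RCLike.norm_conj]; exact mem_ball_zero_iff.1 hz
    have hk := cowen_key a b c d hdet hden hφ ((starRingEnd ℂ) z) hz'
    have e1 : (starRingEnd ℂ) a * z - (starRingEnd ℂ) c
        = (starRingEnd ℂ) (a * (starRingEnd ℂ) z - c) := by
      simp [map_sub, map_mul]
    have e2 : -(starRingEnd ℂ) b * z + (starRingEnd ℂ) d
        = (starRingEnd ℂ) (d - b * (starRingEnd ℂ) z) := by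
      simp only [map_sub, map_mul, Complex.conj_conj]; ring
    rw [e1, e2, RCLike.norm_conj, RCLike.norm_conj]
    exact hk
  have hD0 : ∀ z ∈ Metric.ball (0:ℂ) 1,
      -(starRingEnd ℂ) b * z + (starRingEnd ℂ) d ≠ 0 := by
    intro z hz h0
    have := hDk z hz
    rw [h0, norm_zero] at this
    exact (norm_nonneg _).not_gt this
  constructor
  · exact DifferentiableOn.div
      (((differentiable_id.const_mul _).sub_const _).differentiableOn)
      (((differentiable_id.const_mul _).add_const _).differentiableOn)
      hD0
  · intro z hz
    rw [mem_ball_zero_iff, norm_div,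
      div_lt_one (lt_of_le_of_lt (norm_nonneg _) (hDk z hz))]
    exact hDk z hz
end
end
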